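/- arXiv:2212.12373 — 6 statements merged into one kernel-verified Lean document; each statement's English description precedes it below -/
import Mathlib

section
/- Let 0 < α ≤ 1, q ≥ 2, and let μ be an α-dimensional measure on ℝ, i.e. μ(B(x,ρ)) ≤ C_μ ρ^α for all x ∈ ℝ and ρ > 0. Then for any interval [a,b] ⊂ ℝ and any g ∈ L^{q'}(dμ) (with 1/q + 1/q' = 1), the convolution-type operator satisfies ‖ ∫ g(x') χ_{[a,b]}(x − x') dμ(x') ‖_{L^q(dμ)} ≤ C (b−a)^{2α/q} ‖g‖_{L^{q'}(dμ)}, where C depends only on C_μ, α, q. -/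
open MeasureTheory Set
open scoped ENNReal

lemma young_aux_Icc (α : ℝ) (hα0 : 0 < α) (μ : Measure ℝ) (Cμ : ℝ≥0∞) (hCμ : Cμ ≠ ⊤)
    (hμ : ∀ (x : ℝ) (ρ : ℝ), 0 < ρ → μ (Metric.ball x ρ) ≤ Cμ * ENNReal.ofReal (ρ ^ α))
    (c d : ℝ) (hcd : c ≤ d) : μ (Icc c d) ≤ Cμ * ENNReal.ofReal ((d - c) ^ α) := by
  rcases eq_or_lt_of_le hcd with h | h
  · subst h
    rw [Icc_self, sub_self, Real.zero_rpow hα0.ne', ENNReal.ofReal_zero, mul_zero]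
    have htd : Filter.Tendsto (fun ε : ℝ => Cμ * ENNReal.ofReal (ε ^ α))
        (nhdsWithin 0 (Ioi 0)) (nhds 0) := by
      have h1 : Filter.Tendsto (fun ε : ℝ => ε ^ α) (nhdsWithin 0 (Ioi 0)) (nhds 0) := by
        have h0 := (Real.continuousAt_rpow_const 0 α (Or.inr hα0.le)).tendsto
        rw [Real.zero_rpow hα0.ne'] at h0
        exact h0.mono_left nhdsWithin_le_nhds
      have h2 := (ENNReal.continuous_ofReal.tendsto 0).comp h1
      rw [ENNReal.ofReal_zero] at h2
      have h3 := ENNReal.Tendsto.const_mul h2 (Or.inr hCμ)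
      rwa [mul_zero] at h3
    refine ge_of_tendsto htd ?_
    filter_upwards [self_mem_nhdsWithin] with ε hε
    refine le_trans (measure_mono ?_) (hμ c ε hε)
    intro x hx
    rw [mem_singleton_iff] at hx
    subst hx
    simpa [Metric.mem_ball] using hε
  · refine le_trans (measure_mono ?_) (hμ ((c + d) / 2) (d - c) (by linarith))
    intro x hx
    rw [Metric.mem_ball, Real.dist_eq, abs_lt]
    constructor <;> [skip; skip] <;> simp only [mem_Icc] at hx <;> cases hx <;> linarith

theorem young_type_fractal (α q : ℝ) (hα0 : 0 < α) (hα1 : α ≤ 1) (hq : 2 ≤ q)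
    (μ : Measure ℝ) (Cμ : ℝ≥0∞) (hCμ : Cμ ≠ ⊤)
    (hμ : ∀ (x : ℝ) (ρ : ℝ), 0 < ρ → μ (Metric.ball x ρ) ≤ Cμ * ENNReal.ofReal (ρ ^ α)) :
    ∃ C : ℝ≥0∞, C ≠ ⊤ ∧ ∀ (a b : ℝ), a ≤ b → ∀ g : ℝ → ℝ,
      MemLp g (ENNReal.ofReal (q / (q - 1))) μ →
      eLpNorm (fun x => ∫ x', g x' * Set.indicator (Set.Icc a b) (fun _ => (1:ℝ)) (x - x') ∂μ)
          (ENNReal.ofReal q) μ ≤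
        C * ENNReal.ofReal ((b - a) ^ (2 * α / q)) *
          eLpNorm g (ENNReal.ofReal (q / (q - 1))) μ := by
  have hq0 : (0:ℝ) < q := by linarith
  have hq1 : (1:ℝ) < q := by linarith
  have hq10 : (0:ℝ) < q - 1 := by linarith
  set q' : ℝ := q / (q - 1) with hq'def
  have hq'0 : 0 < q' := div_pos hq0 hq10
  have hinvq : (0:ℝ) ≤ 1 / q := by positivity
  have hqne : q ≠ 0 := hq0.ne'
  have hq1ne : q - 1 ≠ 0 := hq10.ne'
  -- sigma-finiteness
  have hsf : SigmaFinite μ := by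
    refine ⟨⟨⟨fun n => Metric.ball 0 (n + 1), fun _ => trivial, fun n => ?_,
      Metric.iUnion_ball_nat_succ 0⟩⟩⟩
    exact lt_of_le_of_lt (hμ 0 (n + 1) (by positivity))
      (ENNReal.mul_lt_top hCμ.lt_top ENNReal.ofReal_lt_top)
  refine ⟨Cμ ^ (2 / q), ENNReal.rpow_ne_top_of_nonneg (by positivity) hCμ, ?_⟩
  intro a b hab g hg
  set M : ℝ≥0∞ := Cμ * ENNReal.ofReal ((b - a) ^ α) with hMdef
  have hMtop : M ≠ ⊤ := ENNReal.mul_ne_top hCμ ENNReal.ofReal_ne_top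
  set K : ℝ → ℝ → ℝ≥0∞ := fun x y => (Icc a b).indicator (fun _ => 1) (x - y) with hKdef
  have hKmeas : Measurable (fun z : ℝ × ℝ => K z.1 z.2) :=
    (measurable_const.indicator measurableSet_Icc).comp (measurable_fst.sub measurable_snd)
  have hKx : ∀ x, Measurable (K x) := fun x =>
    (measurable_const.indicator measurableSet_Icc).comp (measurable_const.sub measurable_id)
  have hK1 : ∀ x, ∫⁻ y, K x y ∂μ ≤ M := by
    intro x
    have hset : ∀ y : ℝ, K x y = (Icc (x - b) (x - a)).indicator (fun _ => (1:ℝ≥0∞)) y := by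
      intro y
      rw [hKdef]
      simp only [indicator_apply, mem_Icc]
      refine if_congr ?_ rfl rfl
      constructor <;> intro h <;> exact ⟨by linarith [h.1, h.2], by linarith [h.1, h.2]⟩
    calc ∫⁻ y, K x y ∂μ = μ (Icc (x - b) (x - a)) := by
          simp_rw [hset]
          exact lintegral_indicator_one measurableSet_Icc
      _ ≤ Cμ * ENNReal.ofReal ((x - a - (x - b)) ^ α) :=
          young_aux_Icc α hα0 μ Cμ hCμ hμ _ _ (by linarith)
      _ = M := by rw [show x - a - (x - b) = b - a by ring]
  have hK2 : ∀ y, ∫⁻ x, K x y ∂μ ≤ M := by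
    intro y
    have hset : ∀ x : ℝ, K x y = (Icc (y + a) (y + b)).indicator (fun _ => (1:ℝ≥0∞)) x := by
      intro x
      rw [hKdef]
      simp only [indicator_apply, mem_Icc]
      refine if_congr ?_ rfl rfl
      constructor <;> intro h <;> exact ⟨by linarith [h.1, h.2], by linarith [h.1, h.2]⟩
    calc ∫⁻ x, K x y ∂μ = μ (Icc (y + a) (y + b)) := by
          simp_rw [hset]
          exact lintegral_indicator_one measurableSet_Icc
      _ ≤ Cμ * ENNReal.ofReal ((y + b - (y + a)) ^ α) :=
          young_aux_Icc α hα0 μ Cμ hCμ hμ _ _ (by linarith)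
      _ = M := by rw [show y + b - (y + a) = b - a by ring]
  set G : ℝ → ℝ≥0∞ := fun y => (‖g y‖₊ : ℝ≥0∞) with hGdef
  have hG : AEMeasurable G μ := hg.1.enorm
  set J : ℝ≥0∞ := ∫⁻ y, G y ^ q' ∂μ with hJdef
  have hq'ne0 : ENNReal.ofReal q' ≠ 0 := (ENNReal.ofReal_pos.mpr hq'0).ne'
  have hNorm : eLpNorm g (ENNReal.ofReal q') μ = J ^ (1 / q') := by
    rw [eLpNorm_eq_lintegral_rpow_enorm_toReal hq'ne0 ENNReal.ofReal_ne_top,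
      ENNReal.toReal_ofReal hq'0.le]
    rfl
  have hJtop : J ≠ ⊤ := by
    intro hJ
    have h2 := hg.2
    rw [hNorm, hJ, ENNReal.top_rpow_of_pos (by positivity)] at h2
    exact lt_irrefl _ h2
  -- Step A : pointwise bound on the norm of the integral
  have hA : ∀ x : ℝ,
      (‖∫ y, g y * (Icc a b).indicator (fun _ => (1:ℝ)) (x - y) ∂μ‖₊ : ℝ≥0∞) ≤
        ∫⁻ y, G y * K x y ∂μ := by
    intro x
    refine le_trans (enorm_integral_le_lintegral_enorm _) (le_of_eq ?_)
    refine lintegral_congr fun y => ?_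
    show ((‖g y * (Icc a b).indicator (fun _ => (1:ℝ)) (x - y)‖₊ : ℝ≥0∞)) = _
    rw [nnnorm_mul, ENNReal.coe_mul, hGdef, hKdef]
    congr 1
    by_cases h : x - y ∈ Icc a b
    · simp [indicator_of_mem h]
    · simp [indicator_of_notMem h]
  -- Step B : Hölder with three factors
  have hB : ∀ x : ℝ, (∫⁻ y, G y * K x y ∂μ) ≤
      (∫⁻ y, G y ^ q' * K x y ∂μ) ^ (1 / q) * M ^ (1 / q) * J ^ (1 - 2 / q) := by
    intro x
    have hpt : ∀ y : ℝ, G y * K x y ≤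
        (G y ^ q' * K x y) ^ (1 / q) * (K x y) ^ (1 / q) * (G y ^ q') ^ (1 - 2 / q) := by
      intro y
      by_cases h : x - y ∈ Icc a b
      · have hK1' : K x y = 1 := by rw [hKdef]; exact indicator_of_mem h _
        rw [hK1', mul_one, mul_one, ENNReal.one_rpow, mul_one,
          ← ENNReal.rpow_mul, ← ENNReal.rpow_mul,
          ← ENNReal.rpow_add_of_nonneg _ _ (by positivity)
            (mul_nonneg hq'0.le (by rw [sub_nonneg]; rw [div_le_one hq0]; linarith)),
          show q' * (1 / q) + q' * (1 - 2 / q) = 1 by rw [hq'def]; field_simp; ring, ENNReal.rpow_one]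
      · have hK0 : K x y = 0 := by rw [hKdef]; exact indicator_of_notMem h _
        rw [hK0, mul_zero]
        exact zero_le
    refine le_trans (lintegral_mono hpt) ?_
    have hhold := ENNReal.lintegral_prod_norm_pow_le (μ := μ) Finset.univ
      (f := ![fun y => G y ^ q' * K x y, K x, fun y => G y ^ q'])
      (p := ![1 / q, 1 / q, 1 - 2 / q])
      (by
        intro i _
        fin_cases i
        · exact ((hG.pow_const q').mul (hKx x).aemeasurable)
        · exact (hKx x).aemeasurable
        · exact hG.pow_const q')
      (by
        rw [Fin.sum_univ_three]
        simp only [Matrix.cons_val_zero, Matrix.cons_val_one, Matrix.head_cons,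
          Matrix.cons_val_two, Matrix.tail_cons]
        field_simp
        ring)
      (by
        intro i _
        fin_cases i
        · exact hinvq
        · exact hinvq
        · show (0:ℝ) ≤ 1 - 2 / q
          rw [sub_nonneg, div_le_one hq0]; linarith)
    rw [Fin.prod_univ_three] at hhold
    simp only [Fin.prod_univ_three, Matrix.cons_val_zero, Matrix.cons_val_one, Matrix.head_cons,
      Matrix.cons_val_two, Matrix.tail_cons] at hhold
    refine le_trans hhold ?_
    exact mul_le_mul' (mul_le_mul' le_rfl (ENNReal.rpow_le_rpow (hK1 x) hinvq)) le_rfl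
  -- Step C : Tonelli
  have hswap : ∫⁻ x, ∫⁻ y, G y ^ q' * K x y ∂μ ∂μ = ∫⁻ y, ∫⁻ x, G y ^ q' * K x y ∂μ ∂μ :=
    lintegral_lintegral_swap (((hG.pow_const q').comp_snd).mul hKmeas.aemeasurable)
  have hGtop : ∀ y : ℝ, G y ^ q' ≠ ⊤ := fun y =>
    ENNReal.rpow_ne_top_of_nonneg hq'0.le ENNReal.coe_ne_top
  have hdouble : ∫⁻ x, ∫⁻ y, G y ^ q' * K x y ∂μ ∂μ ≤ M * J := by
    rw [hswap]
    calc ∫⁻ y, ∫⁻ x, G y ^ q' * K x y ∂μ ∂μ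
        = ∫⁻ y, G y ^ q' * ∫⁻ x, K x y ∂μ ∂μ :=
          lintegral_congr fun y => lintegral_const_mul' _ _ (hGtop y)
      _ ≤ ∫⁻ y, M * G y ^ q' ∂μ := lintegral_mono fun y => by
          rw [mul_comm]; exact mul_le_mul_left (hK2 y) _
      _ = M * J := lintegral_const_mul' _ _ hMtop
  have hMJq2top : M * J ^ (q - 2) ≠ ⊤ :=
    ENNReal.mul_ne_top hMtop (ENNReal.rpow_ne_top_of_nonneg (by linarith) hJtop)
  have main : (∫⁻ x, (‖∫ y, g y * (Icc a b).indicator (fun _ => (1:ℝ)) (x - y) ∂μ‖₊ : ℝ≥0∞) ^ q ∂μ)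
      ≤ M * M * J ^ (q - 1) := by
    calc (∫⁻ x, (‖∫ y, g y * (Icc a b).indicator (fun _ => (1:ℝ)) (x - y) ∂μ‖₊ : ℝ≥0∞) ^ q ∂μ)
        ≤ ∫⁻ x, (∫⁻ y, G y ^ q' * K x y ∂μ) * (M * J ^ (q - 2)) ∂μ := by
          refine lintegral_mono fun x => ?_
          refine le_trans (ENNReal.rpow_le_rpow ((hA x).trans (hB x)) hq0.le) (le_of_eq ?_)
          rw [ENNReal.mul_rpow_of_nonneg _ _ hq0.le, ENNReal.mul_rpow_of_nonneg _ _ hq0.le,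
            ← ENNReal.rpow_mul, ← ENNReal.rpow_mul, ← ENNReal.rpow_mul,
            show 1 / q * q = 1 by field_simp,
            show (1 - 2 / q) * q = q - 2 by field_simp,
            ENNReal.rpow_one, ENNReal.rpow_one, mul_assoc]
      _ = (∫⁻ x, ∫⁻ y, G y ^ q' * K x y ∂μ ∂μ) * (M * J ^ (q - 2)) :=
          lintegral_mul_const' _ _ hMJq2top
      _ ≤ (M * J) * (M * J ^ (q - 2)) := mul_le_mul' hdouble le_rfl
      _ = M * M * J ^ (q - 1) := by
          rw [mul_mul_mul_comm]
          congr 1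
          have h1 : J * J ^ (q - 2) = J ^ (1:ℝ) * J ^ (q - 2) := by rw [ENNReal.rpow_one]
          rw [h1, ← ENNReal.rpow_add_of_nonneg _ _ zero_le_one (by linarith),
            show (1:ℝ) + (q - 2) = q - 1 by ring]
  rw [eLpNorm_eq_lintegral_rpow_enorm_toReal (ENNReal.ofReal_pos.mpr hq0).ne' ENNReal.ofReal_ne_top,
    ENNReal.toReal_ofReal hq0.le, hNorm]
  calc (∫⁻ x, (‖∫ y, g y * (Icc a b).indicator (fun _ => (1:ℝ)) (x - y) ∂μ‖₊ : ℝ≥0∞) ^ q ∂μ) ^ (1/q)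
      ≤ (M * M * J ^ (q - 1)) ^ (1/q) := ENNReal.rpow_le_rpow main hinvq
    _ = M ^ (1/q) * M ^ (1/q) * J ^ ((q - 1) * (1/q)) := by
        rw [ENNReal.mul_rpow_of_nonneg _ _ hinvq, ENNReal.mul_rpow_of_nonneg _ _ hinvq,
          ← ENNReal.rpow_mul]
    _ = M ^ (2/q) * J ^ (1/q') := by
        rw [← ENNReal.rpow_add_of_nonneg _ _ hinvq hinvq,
          show 1/q + 1/q = 2/q by ring,
          show (q - 1) * (1/q) = 1/q' by rw [hq'def, one_div_div]; ring]
    _ = Cμ ^ (2/q) * ENNReal.ofReal ((b - a) ^ (2 * α / q)) * J ^ (1/q') := by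
        congr 1
        rw [hMdef, ENNReal.mul_rpow_of_nonneg _ _ (by positivity),
          ENNReal.ofReal_rpow_of_nonneg (Real.rpow_nonneg (by linarith) _) (by positivity),
          ← Real.rpow_mul (by linarith : (0:ℝ) ≤ b - a),
          show α * (2/q) = 2 * α / q by ring]
end

section
/- Let 0 < α ≤ 1, q ≥ 2, and let μ be an α-dimensional measure on ℝ. If 0 < qρ/2 < α, then there is a constant C such that for all nonnegative G, H ∈ L^{q'}(dμ) supported in [−1,1], ∬_{[−1,1]²} G(x) H(x') |x−x'|^{−ρ} dμ(x) dμ(x') ≤ C ‖G‖_{L^{q'}(dμ)} ‖H‖_{L^{q'}(dμ)}, where 1/q + 1/q' = 1. -/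
open MeasureTheory Set
open scoped ENNReal

namespace HLSHelper

lemma tsum_rpow_le {ι : Type*} [Countable ι] (x : ι → ℝ≥0∞) {s : ℝ} (hs : 1 ≤ s) :
    ∑' k, x k ^ s ≤ (∑' k, x k) ^ s := by
  set T := ∑' k, x k with hT
  by_cases hTtop : T = ⊤
  · rw [hTtop, ENNReal.top_rpow_of_pos (by linarith)]; exact le_top
  calc ∑' k, x k ^ s ≤ ∑' k, x k * T ^ (s - 1) := by
        refine ENNReal.tsum_le_tsum fun k => ?_
        have hxk : x k ≤ T := ENNReal.le_tsum k
        calc x k ^ s = x k ^ (1 + (s - 1)) := by ring_nf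
          _ = x k ^ (1:ℝ) * x k ^ (s - 1) :=
              ENNReal.rpow_add_of_nonneg _ _ zero_le_one (by linarith)
          _ ≤ x k * T ^ (s - 1) := by
              rw [ENNReal.rpow_one]
              exact mul_le_mul_right (ENNReal.rpow_le_rpow hxk (by linarith)) _
    _ = T * T ^ (s - 1) := by rw [ENNReal.tsum_mul_right]
    _ = T ^ s := by
        have h : T * T ^ (s - 1) = T ^ (1 + (s - 1)) := by
          rw [ENNReal.rpow_add_of_nonneg 1 (s-1) zero_le_one (by linarith), ENNReal.rpow_one]
        rw [h]; norm_num

lemma mem_Ico_iff_floor {δ : ℝ} (hδ : 0 < δ) (y : ℝ) (k : ℤ) :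
    y ∈ Ico ((k:ℝ)*δ) ((k:ℝ)*δ + δ) ↔ k = ⌊y/δ⌋ := by
  rw [Set.mem_Ico, eq_comm, Int.floor_eq_iff]
  constructor
  · rintro ⟨h1, h2⟩
    refine ⟨(le_div_iff₀ hδ).mpr ?_, ?_⟩
    · linarith
    · rw [div_lt_iff₀ hδ]; push_cast; nlinarith
  · rintro ⟨h1, h2⟩
    have h1' := (le_div_iff₀ hδ).mp h1
    have h2' := (div_lt_iff₀ hδ).mp h2
    constructor
    · linarith
    · push_cast at h2'; nlinarith


noncomputable def eind (δ : ℝ) (k : ℤ) (x : ℝ) : ℝ≥0∞ :=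
  (Ico ((k:ℝ)*δ) ((k:ℝ)*δ + δ)).indicator (fun _ => (1:ℝ≥0∞)) x

lemma eind_meas (δ : ℝ) (k : ℤ) : Measurable (eind δ k) :=
  (measurable_const.indicator measurableSet_Ico)

lemma eind_eq_ite {δ : ℝ} (hδ : 0 < δ) (k : ℤ) (y : ℝ) :
    eind δ k y = if k = ⌊y/δ⌋ then 1 else 0 := by
  rw [eind, Set.indicator_apply]
  simp only [mem_Ico_iff_floor hδ]

lemma eind_le_one (δ : ℝ) (k : ℤ) (y : ℝ) : eind δ k y ≤ 1 := by
  rw [eind, Set.indicator_apply]; split <;> simp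

lemma eind_sq {δ : ℝ} (k : ℤ) (y : ℝ) : eind δ k y * eind δ k y = eind δ k y := by
  rw [eind, Set.indicator_apply]; split <;> simp

lemma eind_rpow {δ : ℝ} {s : ℝ} (hs : 0 < s) (k : ℤ) (y : ℝ) :
    eind δ k y ^ s = eind δ k y := by
  rw [eind, Set.indicator_apply]; split
  · simp
  · simp [ENNReal.zero_rpow_of_pos hs]

lemma eind_tsum {δ : ℝ} (hδ : 0 < δ) (y : ℝ) : ∑' k : ℤ, eind δ k y = 1 := by
  have : ∀ k : ℤ, eind δ k y = if k = ⌊y/δ⌋ then 1 else 0 := fun k => eind_eq_ite hδ k y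
  rw [tsum_congr this]
  exact tsum_ite_eq _ 1

lemma eind_lintegral {δ : ℝ} (μ : Measure ℝ) (k : ℤ) :
    ∫⁻ y, eind δ k y ∂μ = μ (Ico ((k:ℝ)*δ) ((k:ℝ)*δ + δ)) := by
  simp only [eind]
  simpa using lintegral_indicator_const measurableSet_Ico (1:ℝ≥0∞)

lemma ico_subset_ball {δ : ℝ} (hδ : 0 < δ) (k : ℤ) :
    Ico ((k:ℝ)*δ) ((k:ℝ)*δ + δ) ⊆ Metric.ball ((k:ℝ)*δ + δ/2) δ := by
  intro y hy
  rw [Set.mem_Ico] at hy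
  rw [Metric.mem_ball, Real.dist_eq, abs_lt]
  constructor <;> linarith [hy.1, hy.2]

lemma indicator_near_bound {δ : ℝ} (hδ : 0 < δ) (x y : ℝ) :
    (if |x - y| ≤ δ then (1:ℝ≥0∞) else 0) ≤
      ∑' k : ℤ, eind δ k x * (eind δ (k-1) y + eind δ k y + eind δ (k+1) y) := by
  split
  case isFalse => exact zero_le
  case isTrue h =>
    set k := ⌊x/δ⌋ with hk
    set k' := ⌊y/δ⌋ with hk'
    have hxk : eind δ k x = 1 := by rw [eind_eq_ite hδ, if_pos hk]
    have hyk' : eind δ k' y = 1 := by rw [eind_eq_ite hδ, if_pos hk']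
    have hdiv : |x/δ - y/δ| ≤ 1 := by
      rw [div_sub_div_same, abs_div, abs_of_pos hδ, div_le_one hδ]; exact h
    have hnear : k' = k - 1 ∨ k' = k ∨ k' = k + 1 := by
      rw [abs_le] at hdiv
      have h1 : (k:ℝ) ≤ x/δ := Int.floor_le _
      have h2 : x/δ < k + 1 := Int.lt_floor_add_one _
      have h3 : (k':ℝ) ≤ y/δ := Int.floor_le _
      have h4 : y/δ < k' + 1 := Int.lt_floor_add_one _
      have hl : (k:ℝ) - 1 < k' + 1 := by linarith
      have hl' : k - 1 < k' + 1 := by exact_mod_cast hl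
      have hr : (k':ℝ) < k + 2 := by linarith
      have hr' : k' < k + 2 := by exact_mod_cast hr
      omega
    have hterm : (1:ℝ≥0∞) ≤ eind δ k x * (eind δ (k-1) y + eind δ k y + eind δ (k+1) y) := by
      rw [hxk, one_mul]
      rcases hnear with h' | h' | h'
      · calc (1:ℝ≥0∞) = eind δ (k-1) y := by rw [← h', hyk']
          _ ≤ _ := le_add_of_le_of_nonneg (le_add_of_le_of_nonneg le_rfl zero_le) zero_le
      · calc (1:ℝ≥0∞) = eind δ k y := by rw [← h', hyk']
          _ ≤ _ := le_add_of_le_of_nonneg (le_add_of_nonneg_left zero_le) zero_le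
      · calc (1:ℝ≥0∞) = eind δ (k+1) y := by rw [← h', hyk']
          _ ≤ _ := le_add_of_nonneg_left zero_le
    exact hterm.trans (ENNReal.le_tsum k)


lemma kernel_dyadic {ρ : ℝ} (hρ : 0 < ρ) {t : ℝ} (ht0 : 0 ≤ t) (ht2 : t ≤ 2) :
    ENNReal.ofReal (t ^ (-ρ)) ≤
      ∑' j : ℕ, ENNReal.ofReal ((2:ℝ) ^ ((j:ℝ) * ρ)) *
        (if t ≤ (2:ℝ) ^ (1 - (j:ℝ)) then 1 else 0) := by
  rcases eq_or_lt_of_le ht0 with h0 | ht0'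
  · rw [← h0, Real.zero_rpow (neg_ne_zero.mpr hρ.ne')]; simp
  set J := ⌊Real.logb 2 (2/t)⌋₊ with hJdef
  have h2t : 1 ≤ 2 / t := (one_le_div ht0').mpr ht2
  have hlog0 : 0 ≤ Real.logb 2 (2/t) := Real.logb_nonneg one_lt_two h2t
  have hJ1 : (J:ℝ) ≤ Real.logb 2 (2/t) := Nat.floor_le hlog0
  have hJ2 : Real.logb 2 (2/t) < J + 1 := Nat.lt_floor_add_one _
  have h2t0 : 0 < 2/t := by positivity
  have e1 : (2:ℝ) ^ ((J:ℝ)) ≤ 2/t := by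
    calc (2:ℝ)^(J:ℝ) ≤ 2 ^ Real.logb 2 (2/t) :=
          Real.rpow_le_rpow_of_exponent_le one_le_two hJ1
      _ = 2/t := Real.rpow_logb two_pos (by norm_num) h2t0
  have e2 : 2/t < (2:ℝ) ^ ((J:ℝ)+1) := by
    calc (2:ℝ)/t = 2 ^ Real.logb 2 (2/t) := (Real.rpow_logb two_pos (by norm_num) h2t0).symm
      _ < 2 ^ ((J:ℝ)+1) := Real.rpow_lt_rpow_of_exponent_lt one_lt_two hJ2
  have hp : (0:ℝ) < 2 ^ (J:ℝ) := Real.rpow_pos_of_pos two_pos _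
  have hp1 : (0:ℝ) < 2 ^ ((J:ℝ)+1) := Real.rpow_pos_of_pos two_pos _
  have ht_le : t ≤ (2:ℝ) ^ (1 - (J:ℝ)) := by
    rw [Real.rpow_sub two_pos, Real.rpow_one, le_div_iff₀ hp]
    have := (le_div_iff₀ ht0').mp e1
    linarith [this]
  have ht_ge : (2:ℝ) ^ (-(J:ℝ)) < t := by
    have h2 : 2 < (2:ℝ) ^ ((J:ℝ)+1) * t := by
      have := (div_lt_iff₀ ht0').mp e2
      linarith
    have hneg : -(J:ℝ) = 1 - ((J:ℝ)+1) := by ring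
    rw [hneg, Real.rpow_sub two_pos, Real.rpow_one, div_lt_iff₀ hp1]
    linarith
  have hbound : t ^ (-ρ) ≤ (2:ℝ) ^ ((J:ℝ)*ρ) := by
    calc t ^ (-ρ) ≤ ((2:ℝ)^(-(J:ℝ))) ^ (-ρ) :=
          Real.rpow_le_rpow_of_nonpos (Real.rpow_pos_of_pos two_pos _) ht_ge.le
            (neg_nonpos.mpr hρ.le)
      _ = 2 ^ ((J:ℝ)*ρ) := by
          rw [← Real.rpow_mul (by norm_num : (0:ℝ) ≤ 2), neg_mul_neg]
  calc ENNReal.ofReal (t^(-ρ))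
      ≤ ENNReal.ofReal ((2:ℝ) ^ ((J:ℝ)*ρ)) * (if t ≤ (2:ℝ) ^ (1 - (J:ℝ)) then 1 else 0) := by
        rw [if_pos ht_le, mul_one]; exact ENNReal.ofReal_le_ofReal hbound
    _ ≤ _ := ENNReal.le_tsum J


lemma holder_piece (μ : Measure ℝ) {r q : ℝ} (hconj : r.HolderConjugate q) {f : ℝ → ℝ≥0∞}
    (hf : Measurable f) (δ : ℝ) (k : ℤ) :
    ∫⁻ x, f x * eind δ k x ∂μ ≤
      (∫⁻ x, f x ^ r * eind δ k x ∂μ) ^ (1/r) *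
        (μ (Ico ((k:ℝ)*δ) ((k:ℝ)*δ + δ))) ^ (1/q) := by
  have he := eind_meas δ k
  have h := ENNReal.lintegral_mul_le_Lp_mul_Lq μ hconj (f := fun x => f x * eind δ k x)
    ((hf.mul he).aemeasurable) (he.aemeasurable)
  have hA : ∫⁻ a, ((fun x => f x * eind δ k x) * eind δ k) a ∂μ = ∫⁻ x, f x * eind δ k x ∂μ := by
    refine lintegral_congr fun x => ?_
    simp only [Pi.mul_apply, mul_assoc, eind_sq]
  have hB : ∫⁻ a, (f a * eind δ k a) ^ r ∂μ = ∫⁻ a, f a ^ r * eind δ k a ∂μ := by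
    refine lintegral_congr fun x => ?_
    rw [ENNReal.mul_rpow_of_nonneg _ _ hconj.nonneg, eind_rpow hconj.pos]
  have hC : ∫⁻ a, eind δ k a ^ q ∂μ = μ (Ico ((k:ℝ)*δ) ((k:ℝ)*δ + δ)) := by
    calc ∫⁻ a, eind δ k a ^ q ∂μ = ∫⁻ a, eind δ k a ∂μ :=
          lintegral_congr fun x => eind_rpow hconj.symm.pos k x
      _ = _ := eind_lintegral μ k
  rw [hA, hB, hC] at h
  exact h

lemma cross_sum (μ : Measure ℝ) {α r q : ℝ} (hconj : r.HolderConjugate q) (hrq : r ≤ q)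
    {Cμ : ℝ≥0∞} {δ : ℝ} (hδ : 0 < δ)
    (hμball : ∀ (x rr : ℝ), 0 < rr → μ (Metric.ball x rr) ≤ Cμ * ENNReal.ofReal (rr^α))
    {f g : ℝ → ℝ≥0∞} (hf : Measurable f) (hg : Measurable g) (m : ℤ) :
    ∑' k : ℤ, (∫⁻ x, f x * eind δ k x ∂μ) * (∫⁻ y, g y * eind δ (k+m) y ∂μ) ≤
      (Cμ * ENNReal.ofReal (δ^α)) ^ (2/q) *
        ((∫⁻ x, f x ^ r ∂μ) ^ (1/r) * (∫⁻ x, g x ^ r ∂μ) ^ (1/r)) := by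
  have hr0 : r ≠ 0 := hconj.ne_zero
  have hq0 : q ≠ 0 := hconj.symm.ne_zero
  have h1q : (0:ℝ) ≤ 1/q := hconj.symm.one_div_nonneg
  have h1r : (0:ℝ) ≤ 1/r := hconj.one_div_nonneg
  set M := (Cμ * ENNReal.ofReal (δ^α)) ^ (1/q) with hM
  set Af : ℤ → ℝ≥0∞ := fun k => ∫⁻ x, f x ^ r * eind δ k x ∂μ with hAf
  set Ag : ℤ → ℝ≥0∞ := fun k => ∫⁻ y, g y ^ r * eind δ k y ∂μ with hAg
  have hμI : ∀ k : ℤ, μ (Ico ((k:ℝ)*δ) ((k:ℝ)*δ + δ)) ≤ Cμ * ENNReal.ofReal (δ^α) :=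
    fun k => le_trans (measure_mono (ico_subset_ball hδ k)) (hμball _ δ hδ)
  have hMk : ∀ k : ℤ, (μ (Ico ((k:ℝ)*δ) ((k:ℝ)*δ + δ))) ^ (1/q) ≤ M :=
    fun k => ENNReal.rpow_le_rpow (hμI k) h1q
  have hterm : ∀ k : ℤ,
      (∫⁻ x, f x * eind δ k x ∂μ) * (∫⁻ y, g y * eind δ (k+m) y ∂μ) ≤
        (M * M) * (Af k ^ (1/r) * Ag (k+m) ^ (1/r)) := by
    intro k
    have h1 : ∫⁻ x, f x * eind δ k x ∂μ ≤ Af k ^ (1/r) * M :=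
      (holder_piece μ hconj hf δ k).trans (mul_le_mul_right (hMk k) _)
    have h2 : ∫⁻ y, g y * eind δ (k+m) y ∂μ ≤ Ag (k+m) ^ (1/r) * M :=
      (holder_piece μ hconj hg δ (k+m)).trans (mul_le_mul_right (hMk (k+m)) _)
    calc _ ≤ (Af k ^ (1/r) * M) * (Ag (k+m) ^ (1/r) * M) := mul_le_mul' h1 h2
      _ = (M * M) * (Af k ^ (1/r) * Ag (k+m) ^ (1/r)) := by ring
  calc ∑' k : ℤ, (∫⁻ x, f x * eind δ k x ∂μ) * (∫⁻ y, g y * eind δ (k+m) y ∂μ)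
      ≤ ∑' k : ℤ, (M * M) * (Af k ^ (1/r) * Ag (k+m) ^ (1/r)) := ENNReal.tsum_le_tsum hterm
    _ = (M * M) * ∑' k : ℤ, Af k ^ (1/r) * Ag (k+m) ^ (1/r) := ENNReal.tsum_mul_left
    _ ≤ (M * M) * ((∫⁻ x, f x ^ r ∂μ) ^ (1/r) * (∫⁻ x, g x ^ r ∂μ) ^ (1/r)) := by
        refine mul_le_mul_right ?_ _
        have hhold : ∑' k : ℤ, Af k ^ (1/r) * Ag (k+m) ^ (1/r) ≤
            (∑' k : ℤ, (Af k ^ (1/r)) ^ r) ^ (1/r) *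
              (∑' k : ℤ, (Ag (k+m) ^ (1/r)) ^ q) ^ (1/q) := by
          have := ENNReal.lintegral_mul_le_Lp_mul_Lq (Measure.count : Measure ℤ) hconj
            (measurable_of_countable _).aemeasurable (measurable_of_countable _).aemeasurable
            (f := fun k => Af k ^ (1/r)) (g := fun k => Ag (k+m) ^ (1/r))
          simpa [lintegral_count] using this
        have hAfsum : (∑' k : ℤ, (Af k ^ (1/r)) ^ r) = ∫⁻ x, f x ^ r ∂μ := by
          have h1 : ∀ k : ℤ, (Af k ^ (1/r)) ^ r = Af k := fun k => by
            rw [← ENNReal.rpow_mul, one_div_mul_cancel hr0, ENNReal.rpow_one]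
          rw [tsum_congr h1]
          rw [← lintegral_tsum (f := fun k x => f x ^ r * eind δ k x) fun k => ((hf.pow measurable_const).mul (eind_meas δ k)).aemeasurable]
          refine lintegral_congr fun x => ?_
          rw [ENNReal.tsum_mul_left, eind_tsum hδ, mul_one]
        have hAgsum : (∑' k : ℤ, (Ag (k+m) ^ (1/r)) ^ q) ^ (1/q) ≤
            (∫⁻ x, g x ^ r ∂μ) ^ (1/r) := by
          have h1 : ∀ k : ℤ, (Ag (k+m) ^ (1/r)) ^ q = Ag (k+m) ^ (q/r) := fun k => by
            rw [← ENNReal.rpow_mul]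
            congr 1
            field_simp
          have h2 : (∑' k : ℤ, Ag (k+m) ^ (q/r)) = ∑' k : ℤ, Ag k ^ (q/r) :=
            (Equiv.addRight m).tsum_eq (fun k => Ag k ^ (q/r))
          have h3 : (∑' k : ℤ, Ag k ^ (q/r)) ≤ (∑' k : ℤ, Ag k) ^ (q/r) :=
            tsum_rpow_le _ ((one_le_div hconj.pos).mpr hrq)
          have h4 : (∑' k : ℤ, Ag k) = ∫⁻ x, g x ^ r ∂μ := by
            rw [← lintegral_tsum (f := fun k x => g x ^ r * eind δ k x) fun k => ((hg.pow measurable_const).mul (eind_meas δ k)).aemeasurable]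
            refine lintegral_congr fun x => ?_
            rw [ENNReal.tsum_mul_left, eind_tsum hδ, mul_one]
          calc (∑' k : ℤ, (Ag (k+m) ^ (1/r)) ^ q) ^ (1/q)
              = (∑' k : ℤ, Ag k ^ (q/r)) ^ (1/q) := by rw [tsum_congr h1, h2]
            _ ≤ ((∫⁻ x, g x ^ r ∂μ) ^ (q/r)) ^ (1/q) := by
                rw [← h4]; exact ENNReal.rpow_le_rpow h3 h1q
            _ = (∫⁻ x, g x ^ r ∂μ) ^ (1/r) := by
                rw [← ENNReal.rpow_mul]
                congr 1
                field_simp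
        calc ∑' k : ℤ, Af k ^ (1/r) * Ag (k+m) ^ (1/r)
            ≤ (∑' k : ℤ, (Af k ^ (1/r)) ^ r) ^ (1/r) *
              (∑' k : ℤ, (Ag (k+m) ^ (1/r)) ^ q) ^ (1/q) := hhold
          _ ≤ (∫⁻ x, f x ^ r ∂μ) ^ (1/r) * (∫⁻ x, g x ^ r ∂μ) ^ (1/r) := by
              rw [hAfsum]
              exact mul_le_mul_right hAgsum _
    _ = (Cμ * ENNReal.ofReal (δ^α)) ^ (2/q) *
        ((∫⁻ x, f x ^ r ∂μ) ^ (1/r) * (∫⁻ x, g x ^ r ∂μ) ^ (1/r)) := by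
        congr 1
        rw [hM, ← ENNReal.rpow_add_of_nonneg _ _ h1q h1q]
        congr 1
        ring


lemma block (μ : Measure ℝ) {α r q : ℝ} (hconj : r.HolderConjugate q) (hrq : r ≤ q)
    {Cμ : ℝ≥0∞} {δ : ℝ} (hδ : 0 < δ)
    (hμball : ∀ (x rr : ℝ), 0 < rr → μ (Metric.ball x rr) ≤ Cμ * ENNReal.ofReal (rr^α))
    {f g : ℝ → ℝ≥0∞} (hf : Measurable f) (hg : Measurable g) :
    ∫⁻ x, ∫⁻ y, f x * g y * (if |x - y| ≤ δ then 1 else 0) ∂μ ∂μ ≤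
      3 * ((Cμ * ENNReal.ofReal (δ^α)) ^ (2/q) *
        ((∫⁻ x, f x ^ r ∂μ) ^ (1/r) * (∫⁻ x, g x ^ r ∂μ) ^ (1/r))) := by
  set E : ℤ → ℝ → ℝ≥0∞ := fun k y => eind δ (k-1) y + eind δ k y + eind δ (k+1) y with hE
  have hEmeas : ∀ k : ℤ, Measurable (fun y => g y * E k y) := fun k =>
    hg.mul (((eind_meas δ (k-1)).add (eind_meas δ k)).add (eind_meas δ (k+1)))
  set Tf : ℤ → ℝ≥0∞ := fun k => ∫⁻ x, f x * eind δ k x ∂μ with hTf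
  set Tg : ℤ → ℝ≥0∞ := fun k => ∫⁻ y, g y * eind δ k y ∂μ with hTg
  set D : ℤ → ℝ≥0∞ := fun k => ∫⁻ y, g y * E k y ∂μ with hD
  have key : ∀ x, ∫⁻ y, f x * g y * (if |x - y| ≤ δ then 1 else 0) ∂μ ≤
      ∑' k : ℤ, (f x * eind δ k x) * D k := by
    intro x
    calc ∫⁻ y, f x * g y * (if |x - y| ≤ δ then 1 else 0) ∂μ
        ≤ ∫⁻ y, ∑' k : ℤ, (f x * eind δ k x) * (g y * E k y) ∂μ := by
          refine lintegral_mono fun y => ?_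
          calc f x * g y * (if |x - y| ≤ δ then 1 else 0)
              ≤ f x * g y * ∑' k : ℤ, eind δ k x * E k y :=
                mul_le_mul_right (indicator_near_bound hδ x y) _
            _ = ∑' k : ℤ, (f x * eind δ k x) * (g y * E k y) := by
                rw [← ENNReal.tsum_mul_left]
                exact tsum_congr fun k => by ring
      _ = ∑' k : ℤ, ∫⁻ y, (f x * eind δ k x) * (g y * E k y) ∂μ :=
          lintegral_tsum fun k => (measurable_const.mul (hEmeas k)).aemeasurable
      _ = ∑' k : ℤ, (f x * eind δ k x) * D k :=
          tsum_congr fun k => lintegral_const_mul _ (hEmeas k)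
  have outer : ∫⁻ x, ∫⁻ y, f x * g y * (if |x - y| ≤ δ then 1 else 0) ∂μ ∂μ ≤
      ∑' k : ℤ, Tf k * D k := by
    calc ∫⁻ x, ∫⁻ y, f x * g y * (if |x - y| ≤ δ then 1 else 0) ∂μ ∂μ
        ≤ ∫⁻ x, ∑' k : ℤ, (f x * eind δ k x) * D k ∂μ := lintegral_mono key
      _ = ∑' k : ℤ, ∫⁻ x, (f x * eind δ k x) * D k ∂μ :=
          lintegral_tsum fun k => ((hf.mul (eind_meas δ k)).mul_const _).aemeasurable
      _ = ∑' k : ℤ, Tf k * D k :=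
          tsum_congr fun k => lintegral_mul_const _ (hf.mul (eind_meas δ k))
  have hDk : ∀ k : ℤ, D k = Tg (k-1) + Tg k + Tg (k+1) := by
    intro k
    calc D k = ∫⁻ y, (g y * eind δ (k-1) y + g y * eind δ k y) + g y * eind δ (k+1) y ∂μ := by
          refine lintegral_congr fun y => ?_
          simp only [hE, mul_add]
      _ = Tg (k-1) + Tg k + Tg (k+1) := by
          rw [lintegral_add_right _ (g := fun y => g y * eind δ (k+1) y) (hg.mul (eind_meas δ (k+1))),
            lintegral_add_right _ (g := fun y => g y * eind δ k y) (hg.mul (eind_meas δ k))]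
  have hsplit : ∑' k : ℤ, Tf k * D k =
      (∑' k : ℤ, Tf k * Tg (k-1)) + (∑' k : ℤ, Tf k * Tg k) + (∑' k : ℤ, Tf k * Tg (k+1)) := by
    calc ∑' k : ℤ, Tf k * D k
        = ∑' k : ℤ, (Tf k * Tg (k-1) + Tf k * Tg k + Tf k * Tg (k+1)) :=
          tsum_congr fun k => by rw [hDk k, mul_add, mul_add]
      _ = _ := by rw [ENNReal.tsum_add, ENNReal.tsum_add]
  set X := (Cμ * ENNReal.ofReal (δ^α)) ^ (2/q) *
    ((∫⁻ x, f x ^ r ∂μ) ^ (1/r) * (∫⁻ x, g x ^ r ∂μ) ^ (1/r)) with hX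
  have h1 : (∑' k : ℤ, Tf k * Tg (k-1)) ≤ X := by
    have : (∑' k : ℤ, Tf k * Tg (k-1)) = ∑' k : ℤ, Tf k * Tg (k + (-1)) :=
      tsum_congr fun k => by rw [sub_eq_add_neg]
    rw [this]
    exact cross_sum μ hconj hrq hδ hμball hf hg (-1)
  have h2 : (∑' k : ℤ, Tf k * Tg k) ≤ X := by
    have : (∑' k : ℤ, Tf k * Tg k) = ∑' k : ℤ, Tf k * Tg (k + 0) :=
      tsum_congr fun k => by rw [add_zero]
    rw [this]
    exact cross_sum μ hconj hrq hδ hμball hf hg 0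
  have h3 : (∑' k : ℤ, Tf k * Tg (k+1)) ≤ X :=
    cross_sum μ hconj hrq hδ hμball hf hg 1
  calc ∫⁻ x, ∫⁻ y, f x * g y * (if |x - y| ≤ δ then 1 else 0) ∂μ ∂μ
      ≤ ∑' k : ℤ, Tf k * D k := outer
    _ = _ := hsplit
    _ ≤ X + X + X := add_le_add (add_le_add h1 h2) h3
    _ = 3 * X := by ring


lemma scalar_step {α q ρ : ℝ} (hq0 : 0 < q) (Cμ : ℝ≥0∞) (j : ℕ) :
    ENNReal.ofReal ((2:ℝ)^((j:ℝ)*ρ)) * (Cμ * ENNReal.ofReal (((2:ℝ)^(1-(j:ℝ)))^α)) ^ (2/q) =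
      Cμ ^ (2/q) * ENNReal.ofReal ((2:ℝ)^(2*α/q)) *
        (ENNReal.ofReal ((2:ℝ)^(ρ - 2*α/q)))^j := by
  have h2 : (0:ℝ) ≤ 2 := by norm_num
  have hq2 : (0:ℝ) ≤ 2/q := by positivity
  have e1 : ((2:ℝ)^(1-(j:ℝ)))^α = (2:ℝ)^((1-(j:ℝ))*α) := (Real.rpow_mul h2 _ _).symm
  rw [e1, ENNReal.mul_rpow_of_nonneg _ _ hq2,
    ENNReal.ofReal_rpow_of_pos (Real.rpow_pos_of_pos two_pos _),
    ← Real.rpow_mul h2]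
  have key : ENNReal.ofReal ((2:ℝ)^((j:ℝ)*ρ)) * ENNReal.ofReal ((2:ℝ)^((1-(j:ℝ))*α*(2/q))) =
      ENNReal.ofReal ((2:ℝ)^(2*α/q)) * (ENNReal.ofReal ((2:ℝ)^(ρ - 2*α/q)))^j := by
    rw [← ENNReal.ofReal_mul (by positivity), ← Real.rpow_add two_pos]
    have hexp : (j:ℝ)*ρ + (1-(j:ℝ))*α*(2/q) = 2*α/q + (ρ - 2*α/q)*(j:ℝ) := by
      field_simp
      ring
    rw [hexp, Real.rpow_add two_pos, ENNReal.ofReal_mul (by positivity)]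
    congr 1
    rw [Real.rpow_mul h2, Real.rpow_natCast, ENNReal.ofReal_pow (by positivity)]
  calc ENNReal.ofReal ((2:ℝ)^((j:ℝ)*ρ)) *
        (Cμ ^ (2/q) * ENNReal.ofReal ((2:ℝ)^((1-(j:ℝ))*α*(2/q))))
      = Cμ ^ (2/q) * (ENNReal.ofReal ((2:ℝ)^((j:ℝ)*ρ)) *
          ENNReal.ofReal ((2:ℝ)^((1-(j:ℝ))*α*(2/q)))) := by ring
    _ = _ := by rw [key]; ring


lemma core {α q ρ r : ℝ} (hq1 : 1 < q) (hconj : r.HolderConjugate q) (hrq : r ≤ q)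
    (hρpos : 0 < ρ) (hρlt : ρ < 2*α/q)
    (μ : Measure ℝ) [SFinite μ] {Cμ : ℝ≥0∞}
    (hμball : ∀ (x rr : ℝ), 0 < rr → μ (Metric.ball x rr) ≤ Cμ * ENNReal.ofReal (rr^α))
    {f g : ℝ → ℝ≥0∞} (hf : Measurable f) (hg : Measurable g)
    (hfs : ∀ x, f x ≠ 0 → x ∈ Icc (-1:ℝ) 1) (hgs : ∀ x, g x ≠ 0 → x ∈ Icc (-1:ℝ) 1) :
    ∫⁻ x, ∫⁻ y, f x * g y * ENNReal.ofReal (|x - y| ^ (-ρ)) ∂μ ∂μ ≤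
      (3 * Cμ ^ (2/q) * ENNReal.ofReal ((2:ℝ)^(2*α/q)) *
        (1 - ENNReal.ofReal ((2:ℝ)^(ρ - 2*α/q)))⁻¹) *
        ((∫⁻ x, f x ^ r ∂μ) ^ (1/r) * (∫⁻ x, g x ^ r ∂μ) ^ (1/r)) := by
  set δ : ℕ → ℝ := fun j => (2:ℝ)^(1-(j:ℝ)) with hδdef
  have hδpos : ∀ j : ℕ, 0 < δ j := fun j => Real.rpow_pos_of_pos two_pos _
  set c : ℕ → ℝ≥0∞ := fun j => ENNReal.ofReal ((2:ℝ)^((j:ℝ)*ρ)) with hc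
  have hpt : ∀ x y : ℝ, f x * g y * ENNReal.ofReal (|x - y| ^ (-ρ)) ≤
      ∑' j : ℕ, c j * (f x * g y * (if |x - y| ≤ δ j then 1 else 0)) := by
    intro x y
    by_cases hfx : f x = 0
    · simp [hfx]
    by_cases hgy : g y = 0
    · simp [hgy]
    have hx := hfs x hfx
    have hy := hgs y hgy
    rw [Set.mem_Icc] at hx hy
    have habs : |x - y| ≤ 2 := by
      rw [abs_le]; constructor <;> linarith [hx.1, hx.2, hy.1, hy.2]
    calc f x * g y * ENNReal.ofReal (|x - y| ^ (-ρ))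
        ≤ f x * g y * ∑' j : ℕ, c j * (if |x - y| ≤ δ j then 1 else 0) :=
          mul_le_mul_right (kernel_dyadic hρpos (abs_nonneg _) habs) _
      _ = ∑' j : ℕ, c j * (f x * g y * (if |x - y| ≤ δ j then 1 else 0)) := by
          rw [← ENNReal.tsum_mul_left]
          exact tsum_congr fun j => by ring
  have hyind : ∀ (j : ℕ) (x : ℝ), Measurable fun y : ℝ => (if |x - y| ≤ δ j then (1:ℝ≥0∞) else 0) := by
    intro j x
    refine Measurable.ite ?_ measurable_const measurable_const
    exact (isClosed_le (continuous_const.sub continuous_id).abs continuous_const).measurableSet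
  have hFj : ∀ j : ℕ, Measurable fun p : ℝ × ℝ =>
      f p.1 * g p.2 * (if |p.1 - p.2| ≤ δ j then (1:ℝ≥0∞) else 0) := by
    intro j
    refine ((hf.comp measurable_fst).mul (hg.comp measurable_snd)).mul ?_
    refine Measurable.ite ?_ measurable_const measurable_const
    exact (isClosed_le ((continuous_fst.sub continuous_snd).abs) continuous_const).measurableSet
  set B : ℕ → ℝ≥0∞ := fun j => ∫⁻ x, ∫⁻ y, f x * g y * (if |x - y| ≤ δ j then 1 else 0) ∂μ ∂μ
    with hB
  have main : ∫⁻ x, ∫⁻ y, f x * g y * ENNReal.ofReal (|x - y| ^ (-ρ)) ∂μ ∂μ ≤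
      ∑' j : ℕ, c j * B j := by
    calc ∫⁻ x, ∫⁻ y, f x * g y * ENNReal.ofReal (|x - y| ^ (-ρ)) ∂μ ∂μ
        ≤ ∫⁻ x, ∫⁻ y, ∑' j : ℕ, c j * (f x * g y * (if |x - y| ≤ δ j then 1 else 0)) ∂μ ∂μ :=
          lintegral_mono fun x => lintegral_mono fun y => hpt x y
      _ = ∫⁻ x, ∑' j : ℕ, c j * ∫⁻ y, f x * g y * (if |x - y| ≤ δ j then 1 else 0) ∂μ ∂μ := by
          refine lintegral_congr fun x => ?_
          rw [lintegral_tsum (f := fun j y => c j * (f x * g y * (if |x - y| ≤ δ j then 1 else 0))) fun j =>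
            (measurable_const.mul ((measurable_const.mul hg).mul (hyind j x))).aemeasurable]
          exact tsum_congr fun j =>
            lintegral_const_mul _ ((measurable_const.mul hg).mul (hyind j x))
      _ = ∑' j : ℕ, c j * B j := by
          rw [lintegral_tsum fun j =>
            ((Measurable.const_mul ((hFj j).lintegral_prod_right') (c j))).aemeasurable]
          exact tsum_congr fun j => lintegral_const_mul _ ((hFj j).lintegral_prod_right')
  set Nf := (∫⁻ x, f x ^ r ∂μ) ^ (1/r) with hNf
  set Ng := (∫⁻ x, g x ^ r ∂μ) ^ (1/r) with hNg
  have hBj : ∀ j : ℕ, B j ≤ 3 * ((Cμ * ENNReal.ofReal ((δ j)^α)) ^ (2/q) * (Nf * Ng)) :=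
    fun j => block μ hconj hrq (hδpos j) hμball hf hg
  have hq0 : 0 < q := lt_trans one_pos hq1
  calc ∫⁻ x, ∫⁻ y, f x * g y * ENNReal.ofReal (|x - y| ^ (-ρ)) ∂μ ∂μ
      ≤ ∑' j : ℕ, c j * B j := main
    _ ≤ ∑' j : ℕ, c j * (3 * ((Cμ * ENNReal.ofReal ((δ j)^α)) ^ (2/q) * (Nf * Ng))) :=
        ENNReal.tsum_le_tsum fun j => mul_le_mul_right (hBj j) _
    _ = ∑' j : ℕ, (3 * (Nf * Ng)) *
        (Cμ ^ (2/q) * ENNReal.ofReal ((2:ℝ)^(2*α/q)) *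
          (ENNReal.ofReal ((2:ℝ)^(ρ - 2*α/q)))^j) := by
        refine tsum_congr fun j => ?_
        have := scalar_step (α := α) (ρ := ρ) hq0 Cμ j
        calc c j * (3 * ((Cμ * ENNReal.ofReal ((δ j)^α)) ^ (2/q) * (Nf * Ng)))
            = (3 * (Nf * Ng)) * (c j * (Cμ * ENNReal.ofReal ((δ j)^α)) ^ (2/q)) := by ring
          _ = _ := by rw [hc, hδdef, this]
    _ = (3 * (Nf * Ng)) * (Cμ ^ (2/q) * ENNReal.ofReal ((2:ℝ)^(2*α/q)) *
          ∑' j : ℕ, (ENNReal.ofReal ((2:ℝ)^(ρ - 2*α/q)))^j) := by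
        rw [ENNReal.tsum_mul_left, ENNReal.tsum_mul_left]
    _ = (3 * Cμ ^ (2/q) * ENNReal.ofReal ((2:ℝ)^(2*α/q)) *
        (1 - ENNReal.ofReal ((2:ℝ)^(ρ - 2*α/q)))⁻¹) * (Nf * Ng) := by
        rw [ENNReal.tsum_geometric]
        ring

end HLSHelper

open HLSHelper in
theorem hls_type_fractal (α q ρ : ℝ) (hα0 : 0 < α) (hα1 : α ≤ 1) (hq : 2 ≤ q)
    (hρ0 : 0 < q * ρ / 2) (hρ : q * ρ / 2 < α)
    (μ : Measure ℝ) (Cμ : ℝ≥0∞) (hCμ : Cμ ≠ ⊤)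
    (hμ : ∀ (x : ℝ) (r : ℝ), 0 < r → μ (Metric.ball x r) ≤ Cμ * ENNReal.ofReal (r ^ α)) :
    ∃ C : ℝ≥0∞, C ≠ ⊤ ∧ ∀ G H : ℝ → ℝ,
      (∀ x, 0 ≤ G x) → (∀ x, 0 ≤ H x) →
      (∀ x, G x ≠ 0 → x ∈ Set.Icc (-1:ℝ) 1) → (∀ x, H x ≠ 0 → x ∈ Set.Icc (-1:ℝ) 1) →
      MemLp G (ENNReal.ofReal (q / (q - 1))) μ →
      MemLp H (ENNReal.ofReal (q / (q - 1))) μ →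
      ∫⁻ x in Set.Icc (-1:ℝ) 1, ∫⁻ x' in Set.Icc (-1:ℝ) 1,
          ENNReal.ofReal (G x * H x' * |x - x'| ^ (-ρ)) ∂μ ∂μ ≤
        C * eLpNorm G (ENNReal.ofReal (q / (q - 1))) μ *
          eLpNorm H (ENNReal.ofReal (q / (q - 1))) μ := by
  have hq0 : (0:ℝ) < q := by linarith
  have hq1 : (1:ℝ) < q := by linarith
  have hρpos : 0 < ρ := by nlinarith
  have hρlt : ρ < 2*α/q := by rw [lt_div_iff₀ hq0]; nlinarith
  set r : ℝ := q / (q - 1) with hrdef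
  have hconj : r.HolderConjugate q := (Real.HolderConjugate.conjExponent hq1).symm
  have hr1 : 1 < r := (Real.holderConjugate_iff.mp hconj).1
  have hr0 : 0 < r := hconj.pos
  have hrq : r ≤ q := by
    rw [hrdef, div_le_iff₀ (by linarith : (0:ℝ) < q - 1)]
    nlinarith
  haveI hloc : IsLocallyFiniteMeasure μ := by
    refine ⟨fun x => ⟨Metric.ball x 1, Metric.ball_mem_nhds x one_pos, ?_⟩⟩
    exact lt_of_le_of_lt (hμ x 1 one_pos)
      (ENNReal.mul_lt_top hCμ.lt_top ENNReal.ofReal_lt_top)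
  set p' : ℝ≥0∞ := ENNReal.ofReal (q / (q - 1)) with hp'def
  have hp'0 : p' ≠ 0 := by
    rw [hp'def]
    simp only [ne_eq, ENNReal.ofReal_eq_zero, not_le]
    exact hr0
  have hp'top : p' ≠ ⊤ := ENNReal.ofReal_ne_top
  set C : ℝ≥0∞ := 3 * Cμ ^ (2/q) * ENNReal.ofReal ((2:ℝ)^(2*α/q)) *
    (1 - ENNReal.ofReal ((2:ℝ)^(ρ - 2*α/q)))⁻¹ with hCdef
  have hgeo_lt : ENNReal.ofReal ((2:ℝ)^(ρ - 2*α/q)) < 1 :=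
    ENNReal.ofReal_lt_one.mpr
      (Real.rpow_lt_one_of_one_lt_of_neg one_lt_two (by linarith))
  have hCne : C ≠ ⊤ := by
    rw [hCdef]
    refine ENNReal.mul_ne_top (ENNReal.mul_ne_top (ENNReal.mul_ne_top ?_ ?_) ?_) ?_
    · simp
    · exact ENNReal.rpow_ne_top_of_nonneg (by positivity) hCμ
    · exact ENNReal.ofReal_ne_top
    · rw [ENNReal.inv_ne_top, Ne, tsub_eq_zero_iff_le]
      exact not_le.mpr hgeo_lt
  refine ⟨C, hCne, ?_⟩
  intro G H hG0 hH0 hGs hHs hGmem hHmem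
  -- measurable representatives
  have hGm := hGmem.aestronglyMeasurable.aemeasurable
  have hHm := hHmem.aestronglyMeasurable.aemeasurable
  set g : ℝ → ℝ := (Icc (-1:ℝ) 1).indicator (fun t => max (hGm.mk G t) 0) with hgdef
  set h : ℝ → ℝ := (Icc (-1:ℝ) 1).indicator (fun t => max (hHm.mk H t) 0) with hhdef
  have hgmeas : Measurable g :=
    (hGm.measurable_mk.max measurable_const).indicator measurableSet_Icc
  have hhmeas : Measurable h :=
    (hHm.measurable_mk.max measurable_const).indicator measurableSet_Icc
  have hGg : G =ᵐ[μ] g := by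
    filter_upwards [hGm.ae_eq_mk] with x hx
    rw [hgdef]
    by_cases hmem : x ∈ Icc (-1:ℝ) 1
    · rw [Set.indicator_of_mem hmem, ← hx, max_eq_left (hG0 x)]
    · rw [Set.indicator_of_notMem hmem]
      by_contra hne
      exact hmem (hGs x hne)
  have hHh : H =ᵐ[μ] h := by
    filter_upwards [hHm.ae_eq_mk] with x hx
    rw [hhdef]
    by_cases hmem : x ∈ Icc (-1:ℝ) 1
    · rw [Set.indicator_of_mem hmem, ← hx, max_eq_left (hH0 x)]
    · rw [Set.indicator_of_notMem hmem]
      by_contra hne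
      exact hmem (hHs x hne)
  have hfgmeas : Measurable fun x => ENNReal.ofReal (g x) :=
    ENNReal.measurable_ofReal.comp hgmeas
  have hfhmeas : Measurable fun x => ENNReal.ofReal (h x) :=
    ENNReal.measurable_ofReal.comp hhmeas
  have hfgsupp : ∀ x, ENNReal.ofReal (g x) ≠ 0 → x ∈ Icc (-1:ℝ) 1 := by
    intro x hx
    by_contra hmem
    apply hx
    rw [hgdef, Set.indicator_of_notMem hmem, ENNReal.ofReal_zero]
  have hfhsupp : ∀ x, ENNReal.ofReal (h x) ≠ 0 → x ∈ Icc (-1:ℝ) 1 := by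
    intro x hx
    by_contra hmem
    apply hx
    rw [hhdef, Set.indicator_of_notMem hmem, ENNReal.ofReal_zero]
  -- rewrite the LHS
  have step12 : ∫⁻ x in Set.Icc (-1:ℝ) 1, ∫⁻ x' in Set.Icc (-1:ℝ) 1,
      ENNReal.ofReal (G x * H x' * |x - x'| ^ (-ρ)) ∂μ ∂μ =
      ∫⁻ x in Set.Icc (-1:ℝ) 1, ∫⁻ y in Set.Icc (-1:ℝ) 1,
        ENNReal.ofReal (g x) * ENNReal.ofReal (h y) *
          ENNReal.ofReal (|x - y| ^ (-ρ)) ∂μ ∂μ := by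
    refine lintegral_congr_ae ?_
    filter_upwards [ae_restrict_of_ae hGg] with x hx
    refine lintegral_congr_ae ?_
    filter_upwards [ae_restrict_of_ae hHh] with y hy
    rw [ENNReal.ofReal_mul (mul_nonneg (hG0 x) (hH0 y)), ENNReal.ofReal_mul (hG0 x), hx, hy]
  have step3 : ∫⁻ x in Set.Icc (-1:ℝ) 1, ∫⁻ y in Set.Icc (-1:ℝ) 1,
      ENNReal.ofReal (g x) * ENNReal.ofReal (h y) *
        ENNReal.ofReal (|x - y| ^ (-ρ)) ∂μ ∂μ ≤
      ∫⁻ x, ∫⁻ y, ENNReal.ofReal (g x) * ENNReal.ofReal (h y) *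
        ENNReal.ofReal (|x - y| ^ (-ρ)) ∂μ ∂μ := by
    refine le_trans (setLIntegral_le_lintegral _ _) (lintegral_mono fun x => ?_)
    exact setLIntegral_le_lintegral _ _
  have hcore := core hq1 hconj hrq hρpos hρlt μ hμ hfgmeas hfhmeas hfgsupp hfhsupp
  -- identify the norms
  have hNf : (∫⁻ x, (ENNReal.ofReal (g x)) ^ r ∂μ) ^ (1/r) = eLpNorm G p' μ := by
    rw [eLpNorm_eq_lintegral_rpow_enorm_toReal hp'0 hp'top, hp'def,
      ENNReal.toReal_ofReal hr0.le]
    congr 1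
    refine lintegral_congr_ae ?_
    filter_upwards [hGg] with x hx
    rw [← hx, Real.enorm_eq_ofReal (hG0 x)]
  have hNg : (∫⁻ x, (ENNReal.ofReal (h x)) ^ r ∂μ) ^ (1/r) = eLpNorm H p' μ := by
    rw [eLpNorm_eq_lintegral_rpow_enorm_toReal hp'0 hp'top, hp'def,
      ENNReal.toReal_ofReal hr0.le]
    congr 1
    refine lintegral_congr_ae ?_
    filter_upwards [hHh] with x hx
    rw [← hx, Real.enorm_eq_ofReal (hH0 x)]
  calc ∫⁻ x in Set.Icc (-1:ℝ) 1, ∫⁻ x' in Set.Icc (-1:ℝ) 1,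
      ENNReal.ofReal (G x * H x' * |x - x'| ^ (-ρ)) ∂μ ∂μ
      = ∫⁻ x in Set.Icc (-1:ℝ) 1, ∫⁻ y in Set.Icc (-1:ℝ) 1,
          ENNReal.ofReal (g x) * ENNReal.ofReal (h y) *
            ENNReal.ofReal (|x - y| ^ (-ρ)) ∂μ ∂μ := step12
    _ ≤ ∫⁻ x, ∫⁻ y, ENNReal.ofReal (g x) * ENNReal.ofReal (h y) *
          ENNReal.ofReal (|x - y| ^ (-ρ)) ∂μ ∂μ := step3
    _ ≤ (3 * Cμ ^ (2/q) * ENNReal.ofReal ((2:ℝ)^(2*α/q)) *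
          (1 - ENNReal.ofReal ((2:ℝ)^(ρ - 2*α/q)))⁻¹) *
        ((∫⁻ x, (ENNReal.ofReal (g x)) ^ r ∂μ) ^ (1/r) *
          (∫⁻ x, (ENNReal.ofReal (h x)) ^ r ∂μ) ^ (1/r)) := hcore
    _ = C * eLpNorm G p' μ * eLpNorm H p' μ := by
        rw [hNf, hNg, hCdef]
        ring
end

section
/- Let 0 < α ≤ 1 and let μ be an α-dimensional measure on ℝ. Then for any j ≥ 0 and nonnegative G, H ∈ L^2(dμ), ∬ G(x) H(x') χ_{[2^{−j}, 2^{−j+1}]}(x − x') dμ(x) dμ(x') ≤ C 2^{−αj} ‖G‖_{L^2(dμ)} ‖H‖_{L^2(dμ)} with C depending only on the α-dimensional constant of μ. -/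
open MeasureTheory Set
open scoped ENNReal

theorem young_dyadic_fractal (α : ℝ) (hα0 : 0 < α) (hα1 : α ≤ 1)
    (μ : Measure ℝ) (Cμ : ℝ≥0∞) (hCμ : Cμ ≠ ⊤)
    (hμ : ∀ (x : ℝ) (r : ℝ), 0 < r → μ (Metric.ball x r) ≤ Cμ * ENNReal.ofReal (r ^ α)) :
    ∃ C : ℝ≥0∞, C ≠ ⊤ ∧ ∀ (j : ℕ) (G H : ℝ → ℝ),
      (∀ x, 0 ≤ G x) → (∀ x, 0 ≤ H x) →
      MemLp G 2 μ → MemLp H 2 μ →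
      ∫⁻ x, ∫⁻ x',
          ENNReal.ofReal (G x * H x') *
            Set.indicator (Set.Icc ((2:ℝ) ^ (-(j:ℝ))) ((2:ℝ) ^ (-(j:ℝ) + 1)))
              (fun _ => (1:ℝ≥0∞)) (x - x') ∂μ ∂μ ≤
        C * ENNReal.ofReal ((2:ℝ) ^ (-α * j)) * eLpNorm G 2 μ * eLpNorm H 2 μ := by
  haveI : IsLocallyFiniteMeasure μ := ⟨fun x => ⟨Metric.ball x 1, Metric.ball_mem_nhds x one_pos,
    lt_of_le_of_lt (hμ x 1 one_pos) (ENNReal.mul_lt_top hCμ.lt_top ENNReal.ofReal_lt_top)⟩⟩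
  refine ⟨Cμ, hCμ, ?_⟩
  intro j G H hG0 hH0 hG hH
  set a : ℝ := (2:ℝ) ^ (-(j:ℝ)) with ha
  set b : ℝ := (2:ℝ) ^ (-(j:ℝ) + 1) with hb
  have ha0 : 0 < a := Real.rpow_pos_of_pos two_pos _
  have hba : b = a + a := by
    rw [hb, ha, Real.rpow_add two_pos, Real.rpow_one]; ring
  set M : ℝ≥0∞ := Cμ * ENNReal.ofReal ((2:ℝ) ^ (-α * (j:ℝ))) with hM
  have hMtop : M ≠ ⊤ := ENNReal.mul_ne_top hCμ ENNReal.ofReal_ne_top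
  have hIcc : ∀ c : ℝ, μ (Icc c (c + a)) ≤ M := by
    intro c
    have hsub : Icc c (c + a) ⊆ Metric.ball (c + a / 2) a := by
      intro x hx
      simp only [mem_Icc] at hx
      simp only [Metric.mem_ball, Real.dist_eq, abs_lt]
      constructor <;> linarith
    have hpow : a ^ α = (2:ℝ) ^ (-α * (j:ℝ)) := by
      rw [ha, ← Real.rpow_mul (by norm_num : (0:ℝ) ≤ 2)]
      congr 1
      ring
    calc μ (Icc c (c + a)) ≤ μ (Metric.ball (c + a / 2) a) := measure_mono hsub
      _ ≤ Cμ * ENNReal.ofReal (a ^ α) := hμ _ a ha0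
      _ = M := by rw [hM, hpow]
  set K : ℝ → ℝ → ℝ≥0∞ := fun x x' =>
    Set.indicator (Set.Icc a b) (fun _ => (1:ℝ≥0∞)) (x - x') with hK
  have hKm : Measurable (fun p : ℝ × ℝ => K p.1 p.2) :=
    (measurable_const.indicator measurableSet_Icc).comp (measurable_fst.sub measurable_snd)
  have hKsq : ∀ x x', K x x' * K x x' = K x x' := by
    intro x x'
    by_cases h : x - x' ∈ Icc a b <;> simp [hK, h]
  have hKrpow : ∀ x x', K x x' ^ (2:ℝ) = K x x' := by
    intro x x'
    by_cases h : x - x' ∈ Icc a b <;> simp [hK, h, ENNReal.rpow_natCast]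
  have hKrow : ∀ x, ∫⁻ x', K x x' ∂μ ≤ M := by
    intro x
    have he : ∀ x', K x x' = Set.indicator (Icc (x - b) ((x - b) + a)) (fun _ => (1:ℝ≥0∞)) x' := by
      intro x'
      have hiff : x - x' ∈ Icc a b ↔ x' ∈ Icc (x - b) ((x - b) + a) := by
        simp only [mem_Icc]
        constructor <;> intro h <;> constructor <;> linarith [hba]
      by_cases h : x - x' ∈ Icc a b
      · simp only [hK, indicator_of_mem h, indicator_of_mem (hiff.mp h)]
      · simp only [hK, indicator_of_notMem h,
          indicator_of_notMem (fun hm => h (hiff.mpr hm))]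
    calc ∫⁻ x', K x x' ∂μ
        = ∫⁻ x', Set.indicator (Icc (x - b) ((x - b) + a)) (fun _ => (1:ℝ≥0∞)) x' ∂μ :=
          lintegral_congr he
      _ = μ (Icc (x - b) ((x - b) + a)) := by
          rw [lintegral_indicator measurableSet_Icc, setLIntegral_one]
      _ ≤ M := hIcc _
  have hKcol : ∀ x', ∫⁻ x, K x x' ∂μ ≤ M := by
    intro x'
    have he : ∀ x, K x x' = Set.indicator (Icc (x' + a) ((x' + a) + a)) (fun _ => (1:ℝ≥0∞)) x := by
      intro x
      have hiff : x - x' ∈ Icc a b ↔ x ∈ Icc (x' + a) ((x' + a) + a) := by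
        simp only [mem_Icc]
        constructor <;> intro h <;> constructor <;> linarith [hba]
      by_cases h : x - x' ∈ Icc a b
      · simp only [hK, indicator_of_mem h, indicator_of_mem (hiff.mp h)]
      · simp only [hK, indicator_of_notMem h,
          indicator_of_notMem (fun hm => h (hiff.mpr hm))]
    calc ∫⁻ x, K x x' ∂μ
        = ∫⁻ x, Set.indicator (Icc (x' + a) ((x' + a) + a)) (fun _ => (1:ℝ≥0∞)) x ∂μ :=
          lintegral_congr he
      _ = μ (Icc (x' + a) ((x' + a) + a)) := by
          rw [lintegral_indicator measurableSet_Icc, setLIntegral_one]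
      _ ≤ M := hIcc _
  -- measurability
  have hGm : AEMeasurable (fun x => ENNReal.ofReal (G x)) μ :=
    ENNReal.measurable_ofReal.comp_aemeasurable hG.1.aemeasurable
  have hHm : AEMeasurable (fun x => ENNReal.ofReal (H x)) μ :=
    ENNReal.measurable_ofReal.comp_aemeasurable hH.1.aemeasurable
  set f : ℝ × ℝ → ℝ≥0∞ := fun p => ENNReal.ofReal (G p.1) * K p.1 p.2 with hf
  set g : ℝ × ℝ → ℝ≥0∞ := fun p => ENNReal.ofReal (H p.2) * K p.1 p.2 with hg
  have hfm : AEMeasurable f (μ.prod μ) := (hGm.comp_fst).mul hKm.aemeasurable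
  have hgm : AEMeasurable g (μ.prod μ) := (hHm.comp_snd).mul hKm.aemeasurable
  have hfg : ∀ p : ℝ × ℝ, ENNReal.ofReal (G p.1 * H p.2) * K p.1 p.2 = f p * g p := by
    intro p
    rw [ENNReal.ofReal_mul (hG0 p.1), hf, hg]
    calc ENNReal.ofReal (G p.1) * ENNReal.ofReal (H p.2) * K p.1 p.2
        = ENNReal.ofReal (G p.1) * ENNReal.ofReal (H p.2) * (K p.1 p.2 * K p.1 p.2) := by
          rw [hKsq]
      _ = ENNReal.ofReal (G p.1) * K p.1 p.2 * (ENNReal.ofReal (H p.2) * K p.1 p.2) := by ring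
  -- squared bounds
  have hNG : ∫⁻ p, f p ^ (2:ℝ) ∂(μ.prod μ) ≤ M * ∫⁻ x, ENNReal.ofReal (G x) ^ (2:ℝ) ∂μ := by
    have he : ∀ p : ℝ × ℝ, f p ^ (2:ℝ) = ENNReal.ofReal (G p.1) ^ (2:ℝ) * K p.1 p.2 := by
      intro p
      rw [hf, ENNReal.mul_rpow_of_nonneg _ _ (by norm_num : (0:ℝ) ≤ 2), hKrpow]
    have hmeas : AEMeasurable (fun p : ℝ × ℝ => ENNReal.ofReal (G p.1) ^ (2:ℝ) * K p.1 p.2)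
        (μ.prod μ) := ((hGm.comp_fst).pow_const _).mul hKm.aemeasurable
    calc ∫⁻ p, f p ^ (2:ℝ) ∂(μ.prod μ)
        = ∫⁻ p, ENNReal.ofReal (G p.1) ^ (2:ℝ) * K p.1 p.2 ∂(μ.prod μ) := by
          exact lintegral_congr fun p => he p
      _ = ∫⁻ x, ∫⁻ x', ENNReal.ofReal (G x) ^ (2:ℝ) * K x x' ∂μ ∂μ :=
          lintegral_prod _ hmeas
      _ = ∫⁻ x, ENNReal.ofReal (G x) ^ (2:ℝ) * ∫⁻ x', K x x' ∂μ ∂μ := by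
          refine lintegral_congr fun x => ?_
          exact lintegral_const_mul' _ _ (ENNReal.rpow_ne_top_of_nonneg (by norm_num)
            ENNReal.ofReal_ne_top)
      _ ≤ ∫⁻ x, ENNReal.ofReal (G x) ^ (2:ℝ) * M ∂μ :=
          lintegral_mono fun x => mul_le_mul_right (hKrow x) _
      _ = M * ∫⁻ x, ENNReal.ofReal (G x) ^ (2:ℝ) ∂μ := by
          simp_rw [mul_comm _ M]
          exact lintegral_const_mul' _ _ hMtop
  have hNH : ∫⁻ p, g p ^ (2:ℝ) ∂(μ.prod μ) ≤ M * ∫⁻ x, ENNReal.ofReal (H x) ^ (2:ℝ) ∂μ := by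
    have he : ∀ p : ℝ × ℝ, g p ^ (2:ℝ) = ENNReal.ofReal (H p.2) ^ (2:ℝ) * K p.1 p.2 := by
      intro p
      rw [hg, ENNReal.mul_rpow_of_nonneg _ _ (by norm_num : (0:ℝ) ≤ 2), hKrpow]
    have hmeas : AEMeasurable (fun p : ℝ × ℝ => ENNReal.ofReal (H p.2) ^ (2:ℝ) * K p.1 p.2)
        (μ.prod μ) := ((hHm.comp_snd).pow_const _).mul hKm.aemeasurable
    calc ∫⁻ p, g p ^ (2:ℝ) ∂(μ.prod μ)
        = ∫⁻ p, ENNReal.ofReal (H p.2) ^ (2:ℝ) * K p.1 p.2 ∂(μ.prod μ) := by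
          exact lintegral_congr fun p => he p
      _ = ∫⁻ x, ∫⁻ x', ENNReal.ofReal (H x') ^ (2:ℝ) * K x x' ∂μ ∂μ :=
          lintegral_prod _ hmeas
      _ = ∫⁻ x', ∫⁻ x, ENNReal.ofReal (H x') ^ (2:ℝ) * K x x' ∂μ ∂μ := by
          rw [← lintegral_prod _ hmeas, lintegral_prod_symm _ hmeas]
      _ = ∫⁻ x', ENNReal.ofReal (H x') ^ (2:ℝ) * ∫⁻ x, K x x' ∂μ ∂μ := by
          refine lintegral_congr fun x' => ?_
          exact lintegral_const_mul' _ _ (ENNReal.rpow_ne_top_of_nonneg (by norm_num)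
            ENNReal.ofReal_ne_top)
      _ ≤ ∫⁻ x', ENNReal.ofReal (H x') ^ (2:ℝ) * M ∂μ :=
          lintegral_mono fun x' => mul_le_mul_right (hKcol x') _
      _ = M * ∫⁻ x, ENNReal.ofReal (H x) ^ (2:ℝ) ∂μ := by
          simp_rw [mul_comm _ M]
          exact lintegral_const_mul' _ _ hMtop
  -- identify with eLpNorm
  have hGnorm : (∫⁻ x, ENNReal.ofReal (G x) ^ (2:ℝ) ∂μ) ^ (1/2:ℝ) = eLpNorm G 2 μ := by
    rw [eLpNorm_eq_lintegral_rpow_enorm_toReal two_ne_zero ENNReal.ofNat_ne_top]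
    simp only [ENNReal.toReal_ofNat]
    congr 1
    refine lintegral_congr fun x => ?_
    rw [Real.enorm_eq_ofReal (hG0 x)]
  have hHnorm : (∫⁻ x, ENNReal.ofReal (H x) ^ (2:ℝ) ∂μ) ^ (1/2:ℝ) = eLpNorm H 2 μ := by
    rw [eLpNorm_eq_lintegral_rpow_enorm_toReal two_ne_zero ENNReal.ofNat_ne_top]
    simp only [ENNReal.toReal_ofNat]
    congr 1
    refine lintegral_congr fun x => ?_
    rw [Real.enorm_eq_ofReal (hH0 x)]
  have hconj : (2:ℝ).HolderConjugate 2 := Real.HolderConjugate.two_two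
  calc ∫⁻ x, ∫⁻ x', ENNReal.ofReal (G x * H x') *
          Set.indicator (Set.Icc a b) (fun _ => (1:ℝ≥0∞)) (x - x') ∂μ ∂μ
      = ∫⁻ p : ℝ × ℝ, f p * g p ∂(μ.prod μ) := by
        have h1 : (∫⁻ p : ℝ × ℝ, f p * g p ∂(μ.prod μ)) =
            ∫⁻ x, ∫⁻ x', f (x, x') * g (x, x') ∂μ ∂μ := lintegral_prod _ (hfm.mul hgm)
        rw [h1]
        exact lintegral_congr fun x => lintegral_congr fun x' => hfg (x, x')
    _ ≤ (∫⁻ p, f p ^ (2:ℝ) ∂(μ.prod μ)) ^ (1/2:ℝ) * (∫⁻ p, g p ^ (2:ℝ) ∂(μ.prod μ)) ^ (1/2:ℝ) :=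
        ENNReal.lintegral_mul_le_Lp_mul_Lq _ hconj hfm hgm
    _ ≤ (M * ∫⁻ x, ENNReal.ofReal (G x) ^ (2:ℝ) ∂μ) ^ (1/2:ℝ) *
        (M * ∫⁻ x, ENNReal.ofReal (H x) ^ (2:ℝ) ∂μ) ^ (1/2:ℝ) :=
        mul_le_mul' (ENNReal.rpow_le_rpow hNG (by norm_num))
          (ENNReal.rpow_le_rpow hNH (by norm_num))
    _ = M * eLpNorm G 2 μ * eLpNorm H 2 μ := by
        rw [ENNReal.mul_rpow_of_nonneg M _ (by norm_num : (0:ℝ) ≤ 1/2),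
          ENNReal.mul_rpow_of_nonneg M _ (by norm_num : (0:ℝ) ≤ 1/2), hGnorm, hHnorm]
        have : M ^ (1/2:ℝ) * M ^ (1/2:ℝ) = M := by
          rw [← ENNReal.rpow_add_of_nonneg _ _ (by norm_num) (by norm_num)]
          norm_num
        calc M ^ (1/2:ℝ) * eLpNorm G 2 μ * (M ^ (1/2:ℝ) * eLpNorm H 2 μ)
            = M ^ (1/2:ℝ) * M ^ (1/2:ℝ) * eLpNorm G 2 μ * eLpNorm H 2 μ := by ring
          _ = M * eLpNorm G 2 μ * eLpNorm H 2 μ := by rw [this]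
    _ = Cμ * ENNReal.ofReal ((2:ℝ) ^ (-α * j)) * eLpNorm G 2 μ * eLpNorm H 2 μ := by
        rw [hM]
end

section
/- (van der Corput, second derivative) Let a < b, let φ: [a,b] → ℝ be twice continuously differentiable with |φ''(ξ)| ≥ 1 for all ξ ∈ [a,b], and let ψ: [a,b] → ℂ be continuously differentiable. Then there exists an absolute constant C such that for all λ > 0, |∫_a^b e^{iλφ(ξ)} ψ(ξ) dξ| ≤ C λ^{−1/2} ( ‖ψ'‖_{L^1[a,b]} + ‖ψ‖_{L^∞[a,b]} ). -/
open MeasureTheory Set intervalIntegral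

noncomputable def Evdc (lam : ℝ) (φ : ℝ → ℝ) (x : ℝ) : ℂ :=
  Complex.exp (Complex.I * ((lam * φ x : ℝ) : ℂ))

lemma norm_Evdc (lam : ℝ) (φ : ℝ → ℝ) (x : ℝ) : ‖Evdc lam φ x‖ = 1 := by
  simp [Evdc, Complex.norm_exp]

lemma hasDerivWithinAt_Evdc {lam : ℝ} {φ f : ℝ → ℝ} {s : Set ℝ} {x : ℝ}
    (h : HasDerivWithinAt φ (f x) s x) :
    HasDerivWithinAt (Evdc lam φ) (Complex.I * lam * f x * Evdc lam φ x) s x := by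
  have h0 : HasDerivWithinAt (fun y => ((lam * φ y : ℝ) : ℂ)) ((lam * f x : ℝ) : ℂ) s x :=
    Complex.ofRealCLM.hasFDerivAt.comp_hasDerivWithinAt x (h.const_mul lam)
  have h1 := (h0.const_mul Complex.I).cexp
  have h2 : HasDerivWithinAt (Evdc lam φ)
      (Complex.exp (Complex.I * ((lam * φ x : ℝ) : ℂ)) * (Complex.I * ((lam * f x : ℝ) : ℂ))) s x := h1
  convert h2 using 1
  simp only [Evdc]; push_cast; ring

lemma continuousOn_Evdc {lam : ℝ} {φ : ℝ → ℝ} {s : Set ℝ} (h : ContinuousOn φ s) :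
    ContinuousOn (Evdc lam φ) s := by
  apply ContinuousOn.cexp
  exact continuousOn_const.mul (Complex.continuous_ofReal.comp_continuousOn (continuousOn_const.mul h))

lemma osc1 {a b lam δ : ℝ} (hab : a ≤ b) (hlam : 0 < lam) (hδ : 0 < δ)
    {φ f g : ℝ → ℝ}
    (hf : ∀ x ∈ Icc a b, HasDerivWithinAt φ (f x) (Icc a b) x)
    (hg : ∀ x ∈ Icc a b, HasDerivWithinAt f (g x) (Icc a b) x)
    (hφc : ContinuousOn φ (Icc a b))
    (hfc : ContinuousOn f (Icc a b)) (hgc : ContinuousOn g (Icc a b))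
    (hfδ : ∀ x ∈ Icc a b, δ ≤ f x) (hg0 : ∀ x ∈ Icc a b, 0 ≤ g x) :
    ‖∫ x in a..b, Evdc lam φ x‖ ≤ 3 / (lam * δ) := by
  have hlδ : 0 < lam * δ := mul_pos hlam hδ
  have huicc : uIcc a b = Icc a b := uIcc_of_le hab
  have hf0 : ∀ x ∈ Icc a b, 0 < f x := fun x hx => lt_of_lt_of_le hδ (hfδ x hx)
  have hlamC : (lam : ℂ) ≠ 0 := Complex.ofReal_ne_zero.mpr hlam.ne'
  set c : ℝ → ℂ := fun x => Complex.I * ((lam * f x : ℝ) : ℂ) with hcdef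
  have hcne : ∀ x ∈ Icc a b, c x ≠ 0 := by
    intro x hx
    exact mul_ne_zero Complex.I_ne_zero
      (Complex.ofReal_ne_zero.mpr (mul_pos hlam (hf0 x hx)).ne')
  set w : ℝ → ℂ := fun x => Evdc lam φ x / c x with hwdef
  set r : ℝ → ℂ := fun x => Evdc lam φ x * (Complex.I * (g x : ℂ) / ((lam : ℂ) * ((f x : ℂ))^2)) with hrdef
  set q : ℝ → ℝ := fun x => g x / (lam * (f x)^2) with hqdef
  -- interior derivative of w
  have hwderiv : ∀ x ∈ Ioo a b, HasDerivAt w (Evdc lam φ x + r x) x := by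
    intro x hx
    have hmem : Icc a b ∈ nhds x := Icc_mem_nhds hx.1 hx.2
    have hxI : x ∈ Icc a b := Ioo_subset_Icc_self hx
    have hfx : HasDerivAt φ (f x) x := (hf x hxI).hasDerivAt hmem
    have hgx : HasDerivAt f (g x) x := (hg x hxI).hasDerivAt hmem
    have hE : HasDerivAt (Evdc lam φ) (Complex.I * lam * f x * Evdc lam φ x) x := by
      have := hasDerivWithinAt_Evdc (lam := lam) (hfx.hasDerivWithinAt (s := univ))
      rwa [hasDerivWithinAt_univ] at this
    have hcx : HasDerivAt c (Complex.I * ((lam * g x : ℝ) : ℂ)) x := by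
      have h0 : HasDerivAt (fun y => ((lam * f y : ℝ) : ℂ)) ((lam * g x : ℝ) : ℂ) x :=
        Complex.ofRealCLM.hasFDerivAt.comp_hasDerivAt x (hgx.const_mul lam)
      exact h0.const_mul Complex.I
    have hw := hE.div hcx (hcne x hxI)
    convert (show HasDerivAt w _ x from hw) using 1
    have hfne : ((f x : ℂ)) ≠ 0 := Complex.ofReal_ne_zero.mpr (hf0 x hxI).ne'
    simp only [hrdef, hcdef, Evdc]
    push_cast
    field_simp
    ring_nf
    linear_combination (↑(g x) : ℂ) * Complex.I_sq
  -- continuity facts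
  have hEc : ContinuousOn (Evdc lam φ) (Icc a b) := continuousOn_Evdc hφc
  have hccont : ContinuousOn c (Icc a b) :=
    continuousOn_const.mul (Complex.continuous_ofReal.comp_continuousOn (continuousOn_const.mul hfc))
  have hwcont : ContinuousOn w (Icc a b) := hEc.div hccont hcne
  have hdenne : ∀ x ∈ Icc a b, ((lam : ℂ) * ((f x : ℂ))^2) ≠ 0 := by
    intro x hx
    exact mul_ne_zero hlamC (pow_ne_zero _ (Complex.ofReal_ne_zero.mpr (hf0 x hx).ne'))
  have hrcont : ContinuousOn r (Icc a b) := by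
    apply hEc.mul
    apply ContinuousOn.div
    · exact continuousOn_const.mul (Complex.continuous_ofReal.comp_continuousOn hgc)
    · exact continuousOn_const.mul ((Complex.continuous_ofReal.comp_continuousOn hfc).pow 2)
    · exact hdenne
  have hEint : IntervalIntegrable (Evdc lam φ) volume a b :=
    (hEc.mono (by rw [huicc])).intervalIntegrable
  have hrint : IntervalIntegrable r volume a b := (hrcont.mono (by rw [huicc])).intervalIntegrable
  have hDint : IntervalIntegrable (fun x => Evdc lam φ x + r x) volume a b := hEint.add hrint
  have hFTC : ∫ x in a..b, (Evdc lam φ x + r x) = w b - w a :=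
    integral_eq_sub_of_hasDeriv_right_of_le hab hwcont
      (fun x hx => (hwderiv x hx).hasDerivWithinAt) hDint
  have hsplit : ∫ x in a..b, Evdc lam φ x = (w b - w a) - ∫ x in a..b, r x := by
    rw [← hFTC, integral_add hEint hrint]; ring
  -- bound on w
  have hwbd : ∀ x ∈ Icc a b, ‖w x‖ ≤ 1 / (lam * δ) := by
    intro x hx
    have hE1 : ‖Evdc lam φ x‖ = 1 := by
      simpa using norm_Evdc lam φ x
    have h1 : ‖w x‖ = 1 / (lam * f x) := by
      simp only [hwdef, hcdef, norm_div, norm_mul, hE1,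
        Complex.norm_I, Complex.norm_real, Real.norm_eq_abs, one_mul]
      rw [abs_of_pos hlam, abs_of_pos (hf0 x hx)]
    rw [h1]
    apply one_div_le_one_div_of_le hlδ
    exact mul_le_mul_of_nonneg_left (hfδ x hx) hlam.le
  -- bound on ∫ r
  have hrq : ∀ x ∈ Icc a b, ‖r x‖ = q x := by
    intro x hx
    have hE1 : ‖Evdc lam φ x‖ = 1 := by
      simpa using norm_Evdc lam φ x
    simp only [hrdef, hqdef, norm_mul, norm_div, hE1, one_mul,
      Complex.norm_I, Complex.norm_real, Real.norm_eq_abs, norm_pow, map_mul, map_pow]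
    rw [abs_of_nonneg (hg0 x hx), abs_of_pos hlam, abs_of_pos (hf0 x hx)]
  have hqint : IntervalIntegrable q volume a b := by
    apply ContinuousOn.intervalIntegrable
    rw [huicc]
    exact hgc.div (continuousOn_const.mul (hfc.pow 2))
      (fun x hx => (mul_pos hlam (pow_pos (hf0 x hx) 2)).ne')
  have hqFTC : ∫ x in a..b, q x = (lam * f a)⁻¹ - (lam * f b)⁻¹ := by
    have hHcont : ContinuousOn (fun x => -(lam * f x)⁻¹) (Icc a b) := by
      apply ContinuousOn.neg
      exact (continuousOn_const.mul hfc).inv₀ (fun x hx => (mul_pos hlam (hf0 x hx)).ne')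
    have hHderiv : ∀ x ∈ Ioo a b, HasDerivWithinAt (fun x => -(lam * f x)⁻¹) (q x) (Ioi x) x := by
      intro x hx
      have hmem : Icc a b ∈ nhds x := Icc_mem_nhds hx.1 hx.2
      have hxI : x ∈ Icc a b := Ioo_subset_Icc_self hx
      have hgx : HasDerivAt f (g x) x := (hg x hxI).hasDerivAt hmem
      have h1 := ((hgx.const_mul lam).inv (mul_pos hlam (hf0 x hxI)).ne').neg
      have h3 : HasDerivAt (fun x => -(lam * f x)⁻¹) (q x) x := by
        convert (show HasDerivAt (fun x => -(lam * f x)⁻¹) _ x from h1) using 1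
        have := (hf0 x hxI).ne'
        field_simp [hqdef]
        simp only [hqdef]
        rw [mul_assoc, div_mul_cancel₀ _ (mul_ne_zero hlam.ne' (pow_ne_zero 2 this))]
      exact h3.hasDerivWithinAt
    have := integral_eq_sub_of_hasDeriv_right_of_le hab hHcont hHderiv hqint
    rw [this]; ring
  have hrbd : ‖∫ x in a..b, r x‖ ≤ 1 / (lam * δ) := by
    calc ‖∫ x in a..b, r x‖ ≤ ∫ x in a..b, ‖r x‖ := norm_integral_le_integral_norm hab
      _ = ∫ x in a..b, q x := by
          apply integral_congr
          intro x hx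
          exact hrq x (huicc ▸ hx)
      _ = (lam * f a)⁻¹ - (lam * f b)⁻¹ := hqFTC
      _ ≤ (lam * f a)⁻¹ := by
          have : 0 ≤ (lam * f b)⁻¹ :=
            (inv_pos.mpr (mul_pos hlam (hf0 b (right_mem_Icc.mpr hab)))).le
          linarith
      _ ≤ 1 / (lam * δ) := by
          rw [one_div]
          apply inv_anti₀ hlδ
          exact mul_le_mul_of_nonneg_left (hfδ a (left_mem_Icc.mpr hab)) hlam.le
  rw [hsplit]
  have hwa := hwbd a (left_mem_Icc.mpr hab)
  have hwb := hwbd b (right_mem_Icc.mpr hab)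
  calc ‖(w b - w a) - ∫ x in a..b, r x‖ ≤ ‖w b - w a‖ + ‖∫ x in a..b, r x‖ := norm_sub_le _ _
    _ ≤ (‖w b‖ + ‖w a‖) + ‖∫ x in a..b, r x‖ := by
        have := norm_sub_le (w b) (w a); linarith
    _ ≤ (1 / (lam * δ) + 1 / (lam * δ)) + 1 / (lam * δ) := by linarith
    _ = 3 / (lam * δ) := by ring

lemma intervalIntegral_conj (f : ℝ → ℂ) (a b : ℝ) :
    ∫ x in a..b, (starRingEnd ℂ) (f x) = (starRingEnd ℂ) (∫ x in a..b, f x) := by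
  simp only [intervalIntegral, integral_conj, map_sub]

lemma growth_of_deriv_ge_one {a b : ℝ} {f g : ℝ → ℝ}
    (hg : ∀ x ∈ Icc a b, HasDerivWithinAt f (g x) (Icc a b) x)
    (hfc : ContinuousOn f (Icc a b)) (hgc : ContinuousOn g (Icc a b))
    (hg1 : ∀ x ∈ Icc a b, 1 ≤ g x) :
    ∀ x ∈ Icc a b, f a + (x - a) ≤ f x := by
  intro x hx
  have hax : a ≤ x := hx.1
  have hsub : Icc a x ⊆ Icc a b := Icc_subset_Icc le_rfl hx.2
  have hint : IntervalIntegrable g volume a x :=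
    ((hgc.mono hsub).mono (by rw [uIcc_of_le hax])).intervalIntegrable
  have hFTC : ∫ y in a..x, g y = f x - f a := by
    apply integral_eq_sub_of_hasDeriv_right_of_le hax (hfc.mono hsub) _ hint
    intro y hy
    have hyI : y ∈ Icc a b := ⟨hy.1.le, (hy.2.trans_le hx.2).le⟩
    have hmem : Icc a b ∈ nhds y := Icc_mem_nhds hy.1 (hy.2.trans_le hx.2)
    exact ((hg y hyI).hasDerivAt hmem).hasDerivWithinAt
  have hmono : x - a ≤ ∫ y in a..x, g y := by
    have h1 : ∫ y in a..x, (1:ℝ) = x - a := by simp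
    rw [← h1]
    apply integral_mono_on hax intervalIntegrable_const hint
    intro y hy
    exact hg1 y (hsub hy)
  linarith

lemma osc2half {a b lam : ℝ} (hab : a ≤ b) (hlam : 0 < lam)
    {φ f g : ℝ → ℝ}
    (hf : ∀ x ∈ Icc a b, HasDerivWithinAt φ (f x) (Icc a b) x)
    (hg : ∀ x ∈ Icc a b, HasDerivWithinAt f (g x) (Icc a b) x)
    (hφc : ContinuousOn φ (Icc a b))
    (hfc : ContinuousOn f (Icc a b)) (hgc : ContinuousOn g (Icc a b))
    (hg1 : ∀ x ∈ Icc a b, 1 ≤ g x) (hfa : 0 ≤ f a) :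
    ‖∫ x in a..b, Evdc lam φ x‖ ≤ 4 * lam ^ (-(1:ℝ)/2) := by
  set δ : ℝ := lam ^ (-(1:ℝ)/2) with hδdef
  have hδpos : 0 < δ := Real.rpow_pos_of_pos hlam _
  have hlamδ : lam * δ = lam ^ ((1:ℝ)/2) := by
    rw [hδdef]
    nth_rewrite 1 [← Real.rpow_one lam]
    rw [← Real.rpow_add hlam]
    norm_num
  have hδinv : δ = (lam ^ ((1:ℝ)/2))⁻¹ := by
    rw [hδdef]
    have h : (-(1:ℝ)/2) = -((1:ℝ)/2) := by norm_num
    rw [h, Real.rpow_neg hlam.le]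
  have h3δ : 3 / (lam * δ) = 3 * δ := by
    rw [hlamδ, hδinv]; ring
  have hnormle : ∀ c d : ℝ, c ≤ d → ‖∫ x in c..d, Evdc lam φ x‖ ≤ d - c := by
    intro c d hcd
    calc ‖∫ x in c..d, Evdc lam φ x‖ ≤ 1 * |d - c| :=
          norm_integral_le_of_norm_le_const (fun x _ => (norm_Evdc lam φ x).le)
      _ = d - c := by rw [one_mul, abs_of_nonneg (by linarith)]
  rcases le_or_gt b (a + δ) with hsmall | hbig
  · calc ‖∫ x in a..b, Evdc lam φ x‖ ≤ b - a := hnormle a b hab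
      _ ≤ δ := by linarith
      _ ≤ 4 * δ := by linarith
  · set m : ℝ := a + δ with hmdef
    have ham : a ≤ m := by simp [hmdef]; linarith
    have hmb : m ≤ b := hbig.le
    have hmI : m ∈ Icc a b := ⟨ham, hmb⟩
    have hEc : ContinuousOn (Evdc lam φ) (Icc a b) := continuousOn_Evdc hφc
    have hint1 : IntervalIntegrable (Evdc lam φ) volume a m :=
      ((hEc.mono (Icc_subset_Icc le_rfl hmb)).mono (by rw [uIcc_of_le ham])).intervalIntegrable
    have hint2 : IntervalIntegrable (Evdc lam φ) volume m b :=
      ((hEc.mono (Icc_subset_Icc ham le_rfl)).mono (by rw [uIcc_of_le hmb])).intervalIntegrable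
    have hsplit : ∫ x in a..b, Evdc lam φ x =
        (∫ x in a..m, Evdc lam φ x) + ∫ x in m..b, Evdc lam φ x :=
      (integral_add_adjacent_intervals hint1 hint2).symm
    have hbd1 : ‖∫ x in a..m, Evdc lam φ x‖ ≤ δ := by
      have := hnormle a m ham
      simpa [hmdef] using this
    have hgrow := growth_of_deriv_ge_one hg hfc hgc hg1
    have hsub : Icc m b ⊆ Icc a b := Icc_subset_Icc ham le_rfl
    have hbd2 : ‖∫ x in m..b, Evdc lam φ x‖ ≤ 3 / (lam * δ) := by
      apply osc1 hmb hlam hδpos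
        (fun x hx => (hf x (hsub hx)).mono hsub)
        (fun x hx => (hg x (hsub hx)).mono hsub)
        (hφc.mono hsub) (hfc.mono hsub) (hgc.mono hsub)
      · intro x hx
        have h1 := hgrow x (hsub hx)
        have h2 : m ≤ x := hx.1
        have : δ ≤ x - a := by rw [hmdef] at h2; linarith
        linarith
      · intro x hx
        have := hg1 x (hsub hx); linarith
    rw [hsplit]
    calc ‖(∫ x in a..m, Evdc lam φ x) + ∫ x in m..b, Evdc lam φ x‖
        ≤ ‖∫ x in a..m, Evdc lam φ x‖ + ‖∫ x in m..b, Evdc lam φ x‖ := norm_add_le _ _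
      _ ≤ δ + 3 / (lam * δ) := by linarith
      _ = 4 * δ := by rw [h3δ]; ring

lemma osc2half' {a b lam : ℝ} (hab : a ≤ b) (hlam : 0 < lam)
    {φ f g : ℝ → ℝ}
    (hf : ∀ x ∈ Icc a b, HasDerivWithinAt φ (f x) (Icc a b) x)
    (hg : ∀ x ∈ Icc a b, HasDerivWithinAt f (g x) (Icc a b) x)
    (hφc : ContinuousOn φ (Icc a b))
    (hfc : ContinuousOn f (Icc a b)) (hgc : ContinuousOn g (Icc a b))
    (hg1 : ∀ x ∈ Icc a b, 1 ≤ g x) (hfb : f b ≤ 0) :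
    ‖∫ x in a..b, Evdc lam φ x‖ ≤ 4 * lam ^ (-(1:ℝ)/2) := by
  set T : ℝ → ℝ := fun x => a + b - x with hTdef
  have hTmaps : ∀ x ∈ Icc a b, T x ∈ Icc a b := by
    intro x hx
    simp only [hTdef, mem_Icc] at *
    constructor <;> linarith [hx.1, hx.2]
  have hTmapsTo : MapsTo T (Icc a b) (Icc a b) := hTmaps
  have hTderiv : ∀ x : ℝ, HasDerivWithinAt T (-1) (Icc a b) x := by
    intro x
    simpa using ((hasDerivWithinAt_id x (Icc a b)).const_sub (a + b))
  have hTc : ContinuousOn T (Icc a b) := (continuous_const.sub continuous_id).continuousOn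
  set φ' : ℝ → ℝ := fun x => φ (T x) with hφ'def
  set f' : ℝ → ℝ := fun x => -f (T x) with hf'def
  set g' : ℝ → ℝ := fun x => g (T x) with hg'def
  have hf' : ∀ x ∈ Icc a b, HasDerivWithinAt φ' (f' x) (Icc a b) x := by
    intro x hx
    have := (hf (T x) (hTmaps x hx)).comp x (hTderiv x) hTmapsTo
    simp only [Function.comp_def, mul_neg_one] at this
    exact this
  have hg' : ∀ x ∈ Icc a b, HasDerivWithinAt f' (g' x) (Icc a b) x := by
    intro x hx
    have h1 := ((hg (T x) (hTmaps x hx)).comp x (hTderiv x) hTmapsTo).neg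
    have h2 : -(g (T x) * -1) = g' x := by simp [hg'def]
    rw [h2] at h1
    exact h1
  have hres := osc2half hab hlam hf' hg'
    (hφc.comp hTc hTmapsTo)
    ((hfc.comp hTc hTmapsTo).neg)
    (hgc.comp hTc hTmapsTo)
    (fun x hx => hg1 (T x) (hTmaps x hx))
    (by simp only [hf'def, hTdef]; simp; linarith)
  have hchange : ∫ x in a..b, Evdc lam φ' x = ∫ x in a..b, Evdc lam φ x := by
    have : (fun x => Evdc lam φ' x) = fun x => Evdc lam φ (a + b - x) := rfl
    rw [this, integral_comp_sub_left (Evdc lam φ) (a + b)]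
    norm_num
  rwa [hchange] at hres

lemma osc2 {a b lam : ℝ} (hab : a ≤ b) (hlam : 0 < lam)
    {φ f g : ℝ → ℝ}
    (hf : ∀ x ∈ Icc a b, HasDerivWithinAt φ (f x) (Icc a b) x)
    (hg : ∀ x ∈ Icc a b, HasDerivWithinAt f (g x) (Icc a b) x)
    (hφc : ContinuousOn φ (Icc a b))
    (hfc : ContinuousOn f (Icc a b)) (hgc : ContinuousOn g (Icc a b))
    (hg1 : ∀ x ∈ Icc a b, 1 ≤ g x) :
    ‖∫ x in a..b, Evdc lam φ x‖ ≤ 8 * lam ^ (-(1:ℝ)/2) := by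
  have hδpos : 0 < lam ^ (-(1:ℝ)/2) := Real.rpow_pos_of_pos hlam _
  rcases le_or_gt 0 (f a) with hfa | hfa
  · have := osc2half hab hlam hf hg hφc hfc hgc hg1 hfa
    linarith
  rcases le_or_gt (f b) 0 with hfb | hfb
  · have := osc2half' hab hlam hf hg hφc hfc hgc hg1 hfb
    linarith
  · obtain ⟨c, hcI, hc0⟩ : ∃ c ∈ Icc a b, f c = 0 := by
      have h0 : (0:ℝ) ∈ Icc (f a) (f b) := ⟨hfa.le, hfb.le⟩
      obtain ⟨c, hc, hc0⟩ := intermediate_value_Icc hab hfc h0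
      exact ⟨c, hc, hc0⟩
    have hsub1 : Icc a c ⊆ Icc a b := Icc_subset_Icc le_rfl hcI.2
    have hsub2 : Icc c b ⊆ Icc a b := Icc_subset_Icc hcI.1 le_rfl
    have hEc : ContinuousOn (Evdc lam φ) (Icc a b) := continuousOn_Evdc hφc
    have hint1 : IntervalIntegrable (Evdc lam φ) volume a c :=
      ((hEc.mono hsub1).mono (by rw [uIcc_of_le hcI.1])).intervalIntegrable
    have hint2 : IntervalIntegrable (Evdc lam φ) volume c b :=
      ((hEc.mono hsub2).mono (by rw [uIcc_of_le hcI.2])).intervalIntegrable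
    have hsplit : ∫ x in a..b, Evdc lam φ x =
        (∫ x in a..c, Evdc lam φ x) + ∫ x in c..b, Evdc lam φ x :=
      (integral_add_adjacent_intervals hint1 hint2).symm
    have hbd1 := osc2half' hcI.1 hlam
      (fun x hx => (hf x (hsub1 hx)).mono hsub1)
      (fun x hx => (hg x (hsub1 hx)).mono hsub1)
      (hφc.mono hsub1) (hfc.mono hsub1) (hgc.mono hsub1)
      (fun x hx => hg1 x (hsub1 hx)) (le_of_eq hc0)
    have hbd2 := osc2half hcI.2 hlam
      (fun x hx => (hf x (hsub2 hx)).mono hsub2)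
      (fun x hx => (hg x (hsub2 hx)).mono hsub2)
      (hφc.mono hsub2) (hfc.mono hsub2) (hgc.mono hsub2)
      (fun x hx => hg1 x (hsub2 hx)) (ge_of_eq hc0)
    rw [hsplit]
    calc ‖(∫ x in a..c, Evdc lam φ x) + ∫ x in c..b, Evdc lam φ x‖
        ≤ ‖∫ x in a..c, Evdc lam φ x‖ + ‖∫ x in c..b, Evdc lam φ x‖ := norm_add_le _ _
      _ ≤ 4 * lam ^ (-(1:ℝ)/2) + 4 * lam ^ (-(1:ℝ)/2) := by linarith
      _ = 8 * lam ^ (-(1:ℝ)/2) := by ring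

lemma osc3 {a b lam : ℝ} (hab : a ≤ b) (hlam : 0 < lam)
    {φ f g : ℝ → ℝ}
    (hf : ∀ x ∈ Icc a b, HasDerivWithinAt φ (f x) (Icc a b) x)
    (hg : ∀ x ∈ Icc a b, HasDerivWithinAt f (g x) (Icc a b) x)
    (hφc : ContinuousOn φ (Icc a b))
    (hfc : ContinuousOn f (Icc a b)) (hgc : ContinuousOn g (Icc a b))
    (hgabs : ∀ x ∈ Icc a b, 1 ≤ |g x|) :
    ‖∫ x in a..b, Evdc lam φ x‖ ≤ 8 * lam ^ (-(1:ℝ)/2) := by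
  have haI : a ∈ Icc a b := left_mem_Icc.mpr hab
  have hsign : (∀ x ∈ Icc a b, 1 ≤ g x) ∨ (∀ x ∈ Icc a b, g x ≤ -1) := by
    rcases le_abs.mp (hgabs a haI) with hpos | hneg
    · left
      intro x hx
      by_contra hlt
      push_neg at hlt
      have hxneg : g x ≤ -1 := by
        rcases le_abs.mp (hgabs x hx) with h | h
        · linarith
        · linarith
      have hzero : (0:ℝ) ∈ uIcc (g a) (g x) := by
        rw [mem_uIcc]; right; constructor <;> linarith
      have hsub : uIcc a x ⊆ Icc a b := uIcc_subset_Icc haI hx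
      obtain ⟨c, hc, hc0⟩ := intermediate_value_uIcc (hgc.mono hsub) hzero
      have := hgabs c (hsub hc)
      rw [hc0] at this
      norm_num at this
    · right
      intro x hx
      by_contra hlt
      push_neg at hlt
      have hxpos : 1 ≤ g x := by
        rcases le_abs.mp (hgabs x hx) with h | h
        · exact h
        · linarith
      have hzero : (0:ℝ) ∈ uIcc (g a) (g x) := by
        rw [mem_uIcc]; left; constructor <;> linarith
      have hsub : uIcc a x ⊆ Icc a b := uIcc_subset_Icc haI hx
      obtain ⟨c, hc, hc0⟩ := intermediate_value_uIcc (hgc.mono hsub) hzero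
      have := hgabs c (hsub hc)
      rw [hc0] at this
      norm_num at this
  rcases hsign with hpos | hneg
  · exact osc2 hab hlam hf hg hφc hfc hgc hpos
  · -- conjugate trick
    have hconj : ∀ x : ℝ, Evdc lam φ x = (starRingEnd ℂ) (Evdc lam (fun y => -φ y) x) := by
      intro x
      simp only [Evdc, ← Complex.exp_conj, map_mul, Complex.conj_I, Complex.conj_ofReal]
      push_cast
      ring_nf
    have heq : ∫ x in a..b, Evdc lam φ x =
        (starRingEnd ℂ) (∫ x in a..b, Evdc lam (fun y => -φ y) x) := by
      rw [← intervalIntegral_conj]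
      exact integral_congr (fun x _ => hconj x)
    rw [heq, RCLike.norm_conj]
    apply osc2 hab hlam (f := fun y => -f y) (g := fun y => -g y)
      (fun x hx => (hf x hx).neg) (fun x hx => (hg x hx).neg)
      hφc.neg hfc.neg hgc.neg
    intro x hx
    have := hneg x hx; linarith

theorem van_der_corput_second :
    ∃ C : ℝ, 0 < C ∧ ∀ (a b : ℝ), a < b → ∀ (φ : ℝ → ℝ) (ψ : ℝ → ℂ),
      ContDiffOn ℝ 2 φ (Set.Icc a b) →
      (∀ ξ ∈ Set.Icc a b, 1 ≤ |iteratedDerivWithin 2 φ (Set.Icc a b) ξ|) →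
      ContDiffOn ℝ 1 ψ (Set.Icc a b) →
      ∀ lam : ℝ, 0 < lam →
        ‖∫ ξ in a..b, Complex.exp (Complex.I * ((lam * φ ξ : ℝ) : ℂ)) * ψ ξ‖ ≤
          C * lam ^ (-(1:ℝ)/2) *
            ((∫ ξ in a..b, ‖derivWithin ψ (Set.Icc a b) ξ‖) + ⨆ ξ : Set.Icc a b, ‖ψ ξ‖) := by
  refine ⟨8, by norm_num, ?_⟩
  intro a b hab φ ψ hφ hiter hψ lam hlam
  have hab' : a ≤ b := hab.le
  have u : UniqueDiffOn ℝ (Icc a b) := uniqueDiffOn_Icc hab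
  set f := derivWithin φ (Icc a b) with hfdef
  set g := derivWithin f (Icc a b) with hgdef
  set ψ' := derivWithin ψ (Icc a b) with hψ'def
  have hφ1 : ContDiffOn ℝ 1 f (Icc a b) := hφ.derivWithin (m := 1) u (by norm_num)
  have hf : ∀ x ∈ Icc a b, HasDerivWithinAt φ (f x) (Icc a b) x := fun x hx =>
    ((hφ.differentiableOn (by norm_num)) x hx).hasDerivWithinAt
  have hg : ∀ x ∈ Icc a b, HasDerivWithinAt f (g x) (Icc a b) x := fun x hx =>
    ((hφ1.differentiableOn one_ne_zero) x hx).hasDerivWithinAt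
  have hφc := hφ.continuousOn
  have hfc := hφ1.continuousOn
  have hgc : ContinuousOn g (Icc a b) := (hφ1.derivWithin (m := 0) u (by norm_num)).continuousOn
  have hψc := hψ.continuousOn
  have hψ'c : ContinuousOn ψ' (Icc a b) := (hψ.derivWithin (m := 0) u (by norm_num)).continuousOn
  have hψd : ∀ x ∈ Icc a b, HasDerivWithinAt ψ (ψ' x) (Icc a b) x := fun x hx =>
    ((hψ.differentiableOn one_ne_zero) x hx).hasDerivWithinAt
  have hiter' : ∀ x ∈ Icc a b, 1 ≤ |g x| := by
    intro x hx
    have hEq : EqOn (iteratedDerivWithin 1 φ (Icc a b)) f (Icc a b) := fun y hy =>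
      congrFun iteratedDerivWithin_one y
    have h2 : iteratedDerivWithin 2 φ (Icc a b) x = g x := by
      rw [iteratedDerivWithin_succ, hgdef]
      exact derivWithin_congr hEq (hEq hx)
    rw [← h2]
    exact hiter x hx
  set M : ℝ := 8 * lam ^ (-(1:ℝ)/2) with hMdef
  have hM0 : 0 < M := by
    have := Real.rpow_pos_of_pos hlam (-(1:ℝ)/2); positivity
  have hEc : ContinuousOn (Evdc lam φ) (Icc a b) := continuousOn_Evdc hφc
  have hEint : ∀ x ∈ Icc a b, ∀ y ∈ Icc a b, IntervalIntegrable (Evdc lam φ) volume x y :=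
    fun x hx y hy => (hEc.mono (uIcc_subset_Icc hx hy)).intervalIntegrable
  set F : ℝ → ℂ := fun x => ∫ t in a..x, Evdc lam φ t with hFdef
  have haI : a ∈ Icc a b := left_mem_Icc.mpr hab'
  have hbI : b ∈ Icc a b := right_mem_Icc.mpr hab'
  have hFbd : ∀ x ∈ Icc a b, ‖F x‖ ≤ M := by
    intro x hx
    have hsub : Icc a x ⊆ Icc a b := Icc_subset_Icc le_rfl hx.2
    exact osc3 hx.1 hlam
      (fun y hy => (hf y (hsub hy)).mono hsub)
      (fun y hy => (hg y (hsub hy)).mono hsub)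
      (hφc.mono hsub) (hfc.mono hsub) (hgc.mono hsub)
      (fun y hy => hiter' y (hsub hy))
  have hFc : ContinuousOn F (Icc a b) := by
    refine (LipschitzOnWith.of_dist_le_mul (K := 1) ?_).continuousOn
    intro x hx y hy
    have h1 : F x - F y = ∫ t in y..x, Evdc lam φ t :=
      integral_interval_sub_left (hEint a haI x hx) (hEint a haI y hy)
    have h2 : ‖F x - F y‖ ≤ 1 * |x - y| := by
      rw [h1]
      exact norm_integral_le_of_norm_le_const (fun t _ => (norm_Evdc lam φ t).le)
    rw [dist_eq_norm, Real.dist_eq]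
    simpa using h2
  have hint1 : IntervalIntegrable (fun x => Evdc lam φ x * ψ x) volume a b :=
    ((hEc.mul hψc).mono (by rw [uIcc_of_le hab'])).intervalIntegrable
  have hint2 : IntervalIntegrable (fun x => F x * ψ' x) volume a b :=
    ((hFc.mul hψ'c).mono (by rw [uIcc_of_le hab'])).intervalIntegrable
  have hFa : F a = 0 := integral_same
  have hFTC : ∫ x in a..b, (Evdc lam φ x * ψ x + F x * ψ' x) = F b * ψ b - F a * ψ a := by
    apply integral_eq_sub_of_hasDeriv_right_of_le hab' (hFc.mul hψc) _ (hint1.add hint2)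
    intro x hx
    have hxI : x ∈ Icc a b := Ioo_subset_Icc_self hx
    have hmem : Icc a b ∈ nhds x := Icc_mem_nhds hx.1 hx.2
    have hFd : HasDerivAt F (Evdc lam φ x) x := by
      apply integral_hasDerivAt_right (hEint a haI x hxI)
        ⟨Icc a b, hmem, hEc.aestronglyMeasurable measurableSet_Icc⟩
      exact hEc.continuousAt hmem
    have hψdx : HasDerivAt ψ (ψ' x) x := (hψd x hxI).hasDerivAt hmem
    exact (hFd.mul hψdx).hasDerivWithinAt
  have hsplit : ∫ x in a..b, Evdc lam φ x * ψ x = F b * ψ b - ∫ x in a..b, F x * ψ' x := by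
    rw [eq_sub_iff_add_eq, ← integral_add hint1 hint2]
    simpa [hFa] using hFTC
  set S : ℝ := ⨆ ξ : Icc a b, ‖ψ ξ‖ with hSdef
  have hbdd : BddAbove (Set.range fun ξ : Icc a b => ‖ψ ξ‖) := by
    obtain ⟨Cb, hCb⟩ := (isCompact_Icc.image_of_continuousOn hψc.norm).bddAbove
    refine ⟨Cb, ?_⟩
    rintro y ⟨ξ, rfl⟩
    exact hCb ⟨ξ.1, ξ.2, rfl⟩
  have hψbS : ‖ψ b‖ ≤ S := le_ciSup hbdd ⟨b, hbI⟩
  have hS0 : 0 ≤ S := le_trans (norm_nonneg _) hψbS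
  have hIψ'0 : 0 ≤ ∫ x in a..b, ‖ψ' x‖ :=
    intervalIntegral.integral_nonneg hab' (fun x _ => norm_nonneg _)
  have hintn1 : IntervalIntegrable (fun x => ‖F x * ψ' x‖) volume a b :=
    (((hFc.mul hψ'c).norm).mono (by rw [uIcc_of_le hab'])).intervalIntegrable
  have hintn2 : IntervalIntegrable (fun x => M * ‖ψ' x‖) volume a b :=
    ((continuousOn_const.mul hψ'c.norm).mono (by rw [uIcc_of_le hab'])).intervalIntegrable
  have hbound2 : ‖∫ x in a..b, F x * ψ' x‖ ≤ M * ∫ x in a..b, ‖ψ' x‖ := by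
    calc ‖∫ x in a..b, F x * ψ' x‖ ≤ ∫ x in a..b, ‖F x * ψ' x‖ :=
          norm_integral_le_integral_norm hab'
      _ ≤ ∫ x in a..b, M * ‖ψ' x‖ := by
          apply integral_mono_on hab' hintn1 hintn2
          intro x hx
          rw [norm_mul]
          exact mul_le_mul_of_nonneg_right (hFbd x hx) (norm_nonneg _)
      _ = M * ∫ x in a..b, ‖ψ' x‖ := integral_const_mul M _
  have hbound1 : ‖F b * ψ b‖ ≤ M * S := by
    rw [norm_mul]
    exact mul_le_mul (hFbd b hbI) hψbS (norm_nonneg _) hM0.le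
  have hgoal : ‖∫ x in a..b, Evdc lam φ x * ψ x‖ ≤ M * ((∫ x in a..b, ‖ψ' x‖) + S) := by
    rw [hsplit]
    calc ‖F b * ψ b - ∫ x in a..b, F x * ψ' x‖
        ≤ ‖F b * ψ b‖ + ‖∫ x in a..b, F x * ψ' x‖ := norm_sub_le _ _
      _ ≤ M * S + M * ∫ x in a..b, ‖ψ' x‖ := by linarith
      _ = M * ((∫ x in a..b, ‖ψ' x‖) + S) := by ring
  calc ‖∫ ξ in a..b, Complex.exp (Complex.I * ((lam * φ ξ : ℝ) : ℂ)) * ψ ξ‖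
      = ‖∫ x in a..b, Evdc lam φ x * ψ x‖ := rfl
    _ ≤ M * ((∫ x in a..b, ‖ψ' x‖) + S) := hgoal
    _ = 8 * lam ^ (-(1:ℝ)/2) * ((∫ ξ in a..b, ‖derivWithin ψ (Set.Icc a b) ξ‖) + ⨆ ξ : Set.Icc a b, ‖ψ ξ‖) := by
        rw [hMdef, hψ'def, hSdef]
end

section
/- (van der Corput, first derivative) Let a < b, let φ: [a,b] → ℝ be continuously differentiable with φ' monotonic on (a,b) and |φ'(ξ)| ≥ 1 for all ξ ∈ [a,b], and let ψ: [a,b] → ℂ be continuously differentiable. Then there exists an absolute constant C such that for all λ > 0, |∫_a^b e^{iλφ(ξ)} ψ(ξ) dξ| ≤ C λ^{−1} ( ‖ψ'‖_{L^1[a,b]} + ‖ψ‖_{L^∞[a,b]} ). -/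
open MeasureTheory Set intervalIntegral

lemma vdc_core (c d M : ℝ) (hcd : c ≤ d) (h : ℝ → ℝ) (F f : ℝ → ℂ)
    (hh : Antitone h) (hh0 : ∀ ξ, 0 ≤ h ξ) (hhM : ∀ ξ, h ξ ≤ M)
    (hf : Continuous f)
    (hFc : ContinuousOn F (Icc c d)) (hF1 : ∀ ξ ∈ Icc c d, ‖F ξ‖ ≤ 1)
    (hFf : ∀ ξ ∈ Ioo c d, HasDerivAt F (f ξ) ξ) :
    ‖∫ ξ in Ioc c d, h ξ • f ξ‖ ≤ 2 * M := by
  have hM : 0 ≤ M := le_trans (hh0 0) (hhM 0)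
  have hhm : Measurable h := hh.measurable
  -- layer-cake identity
  have layer : ∀ ξ : ℝ, h ξ • f ξ = ∫ t in Ioc (0:ℝ) M, (if t < h ξ then f ξ else 0) := by
    intro ξ
    have hind : (fun t => if t < h ξ then f ξ else 0)
        = (Iio (h ξ)).indicator (fun _ => f ξ) := by
      ext t; simp [Set.indicator_apply, Set.mem_Iio]
    rw [hind, MeasureTheory.integral_indicator measurableSet_Iio,
      Measure.restrict_restrict measurableSet_Iio, setIntegral_const]
    have hset : Iio (h ξ) ∩ Ioc 0 M = Ioo 0 (h ξ) := by
      ext t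
      simp only [mem_inter_iff, mem_Iio, mem_Ioc, mem_Ioo]
      exact ⟨fun ⟨h1, h2, _⟩ => ⟨h2, h1⟩, fun ⟨h1, h2⟩ => ⟨h2, h1, h2.le.trans (hhM ξ)⟩⟩
    rw [hset, Real.volume_real_Ioo_of_le (hh0 ξ), sub_zero]
  -- integrability on the product
  obtain ⟨K, hK⟩ : ∃ K, ∀ x ∈ Icc c d, ‖f x‖ ≤ K :=
    isCompact_Icc.exists_bound_of_continuousOn hf.continuousOn
  have hK0 : 0 ≤ K := le_trans (norm_nonneg _) (hK c ⟨le_rfl, hcd⟩)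
  set μ : Measure (ℝ × ℝ) :=
    (volume.restrict (Ioc c d)).prod (volume.restrict (Ioc (0:ℝ) M)) with hμ
  set g : ℝ × ℝ → ℂ := fun p => if p.2 < h p.1 then f p.1 else 0 with hg
  have hgm : StronglyMeasurable g := by
    have hA : MeasurableSet {p : ℝ × ℝ | p.2 < h p.1} :=
      measurableSet_lt measurable_snd (hhm.comp measurable_fst)
    have : g = ({p : ℝ × ℝ | p.2 < h p.1}).indicator (fun p => f p.1) := by
      ext p; by_cases hp : p.2 < h p.1 <;> simp [hg, Set.indicator_apply, hp]
    rw [this]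
    exact ((hf.comp continuous_fst).stronglyMeasurable).indicator hA
  have hmem : ∀ᵐ p ∂μ, p ∈ (Ioc c d) ×ˢ (Ioc (0:ℝ) M) := by
    rw [hμ, Measure.prod_restrict]
    exact ae_restrict_mem (measurableSet_Ioc.prod measurableSet_Ioc)
  have hgi : Integrable g μ := by
    refine (integrable_const K).mono' hgm.aestronglyMeasurable ?_
    refine hmem.mono fun p hp => ?_
    by_cases hcase : p.2 < h p.1
    · simpa [hg, hcase] using hK p.1 (Ioc_subset_Icc_self hp.1)
    · simpa [hg, hcase] using hK0
  -- swap
  have hswap : ∫ ξ in Ioc c d, h ξ • f ξ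
      = ∫ t in Ioc (0:ℝ) M, ∫ ξ in Ioc c d, (if t < h ξ then f ξ else 0) := by
    calc ∫ ξ in Ioc c d, h ξ • f ξ
        = ∫ ξ in Ioc c d, ∫ t in Ioc (0:ℝ) M, (if t < h ξ then f ξ else 0) := by
          simp_rw [layer]
      _ = ∫ t in Ioc (0:ℝ) M, ∫ ξ in Ioc c d, (if t < h ξ then f ξ else 0) :=
          integral_integral_swap (by exact hgi)
  rw [hswap]
  -- slice bound
  have slice : ∀ t : ℝ, ‖∫ ξ in Ioc c d, (if t < h ξ then f ξ else 0)‖ ≤ 2 := by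
    intro t
    have hSm : MeasurableSet {ξ : ℝ | t < h ξ} := measurableSet_lt measurable_const hhm
    have hrw : ∫ ξ in Ioc c d, (if t < h ξ then f ξ else 0)
        = ∫ ξ in {ξ : ℝ | t < h ξ} ∩ Ioc c d, f ξ := by
      have hind : (fun ξ => if t < h ξ then f ξ else 0)
          = ({ξ : ℝ | t < h ξ}).indicator f := by
        ext ξ; simp [Set.indicator_apply]
      rw [hind, MeasureTheory.integral_indicator hSm, Measure.restrict_restrict hSm]
    rw [hrw]
    set S := {ξ : ℝ | t < h ξ} ∩ Ioc c d with hS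
    by_cases hne : S.Nonempty
    · have hbdd : BddAbove S := BddAbove.mono inter_subset_right bddAbove_Ioc
      set u := sSup S with hu
      have hu1 : u ≤ d := csSup_le hne fun x hx => hx.2.2
      obtain ⟨x0, hx0⟩ := hne
      have hu2 : c ≤ u := hx0.2.1.le.trans (le_csSup hbdd hx0)
      have hsub1 : Ioo c u ⊆ S := by
        intro η hη
        obtain ⟨x, hx, hηx⟩ := exists_lt_of_lt_csSup ⟨x0, hx0⟩ hη.2
        exact ⟨lt_of_lt_of_le hx.1 (hh hηx.le), hη.1, (hη.2.le.trans hu1)⟩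
      have hsub2 : S ⊆ Ioc c u := fun x hx => ⟨hx.2.1, le_csSup hbdd hx⟩
      have hae : S =ᵐ[volume] Ioc c u := by
        rw [MeasureTheory.ae_eq_set]
        constructor
        · exact measure_mono_null (fun x hx => (hx.2 (hsub2 hx.1)).elim)
            (measure_singleton u)
        · refine measure_mono_null (t := {u}) ?_ (measure_singleton u)
          intro x hx
          rcases lt_or_eq_of_le hx.1.2 with hlt | heq
          · exact absurd (hsub1 ⟨hx.1.1, hlt⟩) hx.2
          · exact heq
      rw [setIntegral_congr_set hae, ← intervalIntegral.integral_of_le hu2]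
      have hftc : ∫ ξ in c..u, f ξ = F u - F c :=
        intervalIntegral.integral_eq_sub_of_hasDerivAt_of_le hu2
          (hFc.mono (Icc_subset_Icc le_rfl hu1))
          (fun x hx => hFf x ⟨hx.1, lt_of_lt_of_le hx.2 hu1⟩)
          (hf.intervalIntegrable _ _)
      rw [hftc]
      calc ‖F u - F c‖ ≤ ‖F u‖ + ‖F c‖ := norm_sub_le _ _
        _ ≤ 1 + 1 := add_le_add (hF1 u ⟨hu2, hu1⟩) (hF1 c ⟨le_rfl, hcd⟩)
        _ = 2 := by norm_num
    · rw [not_nonempty_iff_eq_empty] at hne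
      simp [hne]
  -- outer bound
  have houter := norm_setIntegral_le_of_norm_le_const_ae'
    (by simp [Real.volume_Ioc] : volume (Ioc (0:ℝ) M) < ⊤)
    (C := 2) (Filter.Eventually.of_forall fun t _ => slice t)
  calc ‖∫ t in Ioc (0:ℝ) M, ∫ ξ in Ioc c d, (if t < h ξ then f ξ else 0)‖
      ≤ 2 * (volume (Ioc (0:ℝ) M)).toReal := houter
    _ = 2 * M := by rw [Real.volume_Ioc, ENNReal.toReal_ofReal (by linarith), sub_zero]


lemma vdc_stepB (c d M : ℝ) (hcd : c ≤ d) (hM : 0 ≤ M) (h : ℝ → ℝ) (F f : ℝ → ℂ)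
    (hmono : Antitone h ∨ Monotone h) (hbd : ∀ ξ, |h ξ| ≤ M)
    (hf : Continuous f)
    (hFc : ContinuousOn F (Icc c d)) (hF1 : ∀ ξ ∈ Icc c d, ‖F ξ‖ ≤ 1)
    (hFf : ∀ ξ ∈ Ioo c d, HasDerivAt F (f ξ) ξ) :
    ‖∫ ξ in Ioc c d, h ξ • f ξ‖ ≤ 6 * M := by
  have hmeas : Measurable h := hmono.elim Antitone.measurable Monotone.measurable
  have hint_f : IntegrableOn f (Ioc c d) := hf.integrableOn_Ioc
  have hint_hf : IntegrableOn (fun ξ => h ξ • f ξ) (Ioc c d) := by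
    refine (hint_f.norm.const_mul M).mono'
      ((hmeas.aestronglyMeasurable).smul hf.aestronglyMeasurable) ?_
    refine Filter.Eventually.of_forall fun ξ => ?_
    rw [norm_smul]
    exact mul_le_mul_of_nonneg_right (by simpa using hbd ξ) (norm_nonneg _)
  have hFTC : ∫ ξ in Ioc c d, f ξ = F d - F c := by
    rw [← intervalIntegral.integral_of_le hcd]
    exact intervalIntegral.integral_eq_sub_of_hasDerivAt_of_le hcd hFc hFf
      (hf.intervalIntegrable _ _)
  have hFd : ‖∫ ξ in Ioc c d, f ξ‖ ≤ 2 := by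
    rw [hFTC]
    calc ‖F d - F c‖ ≤ ‖F d‖ + ‖F c‖ := norm_sub_le _ _
      _ ≤ 1 + 1 := add_le_add (hF1 d ⟨hcd, le_rfl⟩) (hF1 c ⟨le_rfl, hcd⟩)
      _ = 2 := by norm_num
  rcases hmono with hA | hMo
  · -- antitone case : use h + M ∈ [0, 2M]
    have key := vdc_core c d (2*M) hcd (fun ξ => h ξ + M) F f
      (fun x y hxy => by have := hA hxy; dsimp only; linarith)
      (fun ξ => by have := abs_le.1 (hbd ξ); linarith)
      (fun ξ => by have := abs_le.1 (hbd ξ); linarith)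
      hf hFc hF1 hFf
    have hsplit : ∫ ξ in Ioc c d, (h ξ + M) • f ξ
        = (∫ ξ in Ioc c d, h ξ • f ξ) + M • ∫ ξ in Ioc c d, f ξ := by
      have hMf : IntegrableOn (fun ξ => M • f ξ) (Ioc c d) := hint_f.smul M
      simp_rw [add_smul]
      rw [integral_add hint_hf hMf, MeasureTheory.integral_smul]
    have heq : ∫ ξ in Ioc c d, h ξ • f ξ
        = (∫ ξ in Ioc c d, (h ξ + M) • f ξ) - M • ∫ ξ in Ioc c d, f ξ := by
      rw [hsplit]; ring
    rw [heq]
    have h2 : ‖M • ∫ ξ in Ioc c d, f ξ‖ ≤ M * 2 := by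
      rw [norm_smul, Real.norm_eq_abs, abs_of_nonneg hM]
      exact mul_le_mul_of_nonneg_left hFd hM
    calc ‖_ - _‖ ≤ ‖∫ ξ in Ioc c d, (h ξ + M) • f ξ‖ + ‖M • ∫ ξ in Ioc c d, f ξ‖ :=
          norm_sub_le _ _
      _ ≤ 2 * (2*M) + M * 2 := add_le_add key h2
      _ = 6 * M := by ring
  · -- monotone case : use M - h ∈ [0, 2M], antitone
    have key := vdc_core c d (2*M) hcd (fun ξ => M - h ξ) F f
      (fun x y hxy => by have := hMo hxy; dsimp only; linarith)
      (fun ξ => by have := abs_le.1 (hbd ξ); linarith)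
      (fun ξ => by have := abs_le.1 (hbd ξ); linarith)
      hf hFc hF1 hFf
    have hsplit : ∫ ξ in Ioc c d, (M - h ξ) • f ξ
        = (M • ∫ ξ in Ioc c d, f ξ) - ∫ ξ in Ioc c d, h ξ • f ξ := by
      have hMf : IntegrableOn (fun ξ => M • f ξ) (Ioc c d) := hint_f.smul M
      simp_rw [sub_smul]
      rw [integral_sub hMf hint_hf, MeasureTheory.integral_smul]
    have heq : ∫ ξ in Ioc c d, h ξ • f ξ
        = (M • ∫ ξ in Ioc c d, f ξ) - ∫ ξ in Ioc c d, (M - h ξ) • f ξ := by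
      rw [hsplit]; ring
    rw [heq]
    have h2 : ‖M • ∫ ξ in Ioc c d, f ξ‖ ≤ M * 2 := by
      rw [norm_smul, Real.norm_eq_abs, abs_of_nonneg hM]
      exact mul_le_mul_of_nonneg_left hFd hM
    calc ‖_ - _‖ ≤ ‖M • ∫ ξ in Ioc c d, f ξ‖ + ‖∫ ξ in Ioc c d, (M - h ξ) • f ξ‖ :=
          norm_sub_le _ _
      _ ≤ M * 2 + 2 * (2*M) := add_le_add h2 key
      _ = 6 * M := by ring

lemma vdc_mono_closure {f : ℝ → ℝ} {a b : ℝ} (hab : a < b)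
    (hc : ContinuousOn f (Icc a b)) (hm : MonotoneOn f (Ioo a b)) :
    MonotoneOn f (Icc a b) := by
  intro x hx y hy hxy
  rcases eq_or_lt_of_le hxy with rfl | hlt
  · exact le_rfl
  set m := (x + y) / 2 with hmdef
  have hxm : x < m := by rw [hmdef]; linarith
  have hmy : m < y := by rw [hmdef]; linarith
  have hmab : m ∈ Ioo a b := ⟨lt_of_le_of_lt hx.1 hxm, lt_of_lt_of_le hmy hy.2⟩
  have hsub1 : Ioo x m ⊆ Icc a b :=
    fun s hs => ⟨hx.1.trans hs.1.le, (hs.2.le.trans hmy.le).trans hy.2⟩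
  have hsub1' : Ioo x m ⊆ Ioo a b :=
    fun s hs => ⟨lt_of_le_of_lt hx.1 hs.1, lt_of_lt_of_le (hs.2.trans hmy) hy.2⟩
  have hsub2 : Ioo m y ⊆ Icc a b :=
    fun s hs => ⟨(hx.1.trans hxm.le).trans hs.1.le, hs.2.le.trans hy.2⟩
  have hsub2' : Ioo m y ⊆ Ioo a b :=
    fun s hs => ⟨hmab.1.trans hs.1, lt_of_lt_of_le hs.2 hy.2⟩
  haveI h1 : (nhdsWithin x (Ioo x m)).NeBot :=
    mem_closure_iff_nhdsWithin_neBot.1 (by rw [closure_Ioo hxm.ne]; exact ⟨le_rfl, hxm.le⟩)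
  have ht1 : Filter.Tendsto f (nhdsWithin x (Ioo x m)) (nhds (f x)) :=
    (hc.continuousWithinAt hx).mono_left (nhdsWithin_mono x hsub1)
  have hfx : f x ≤ f m := by
    refine le_of_tendsto ht1 ?_
    filter_upwards [self_mem_nhdsWithin] with s hs
    exact hm (hsub1' hs) hmab hs.2.le
  haveI h2 : (nhdsWithin y (Ioo m y)).NeBot :=
    mem_closure_iff_nhdsWithin_neBot.1 (by rw [closure_Ioo hmy.ne]; exact ⟨hmy.le, le_rfl⟩)
  have ht2 : Filter.Tendsto f (nhdsWithin y (Ioo m y)) (nhds (f y)) :=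
    (hc.continuousWithinAt hy).mono_left (nhdsWithin_mono y hsub2)
  have hfy : f m ≤ f y := by
    refine ge_of_tendsto ht2 ?_
    filter_upwards [self_mem_nhdsWithin] with s hs
    exact hm hmab (hsub2' hs) hs.1.le
  exact hfx.trans hfy

lemma vdc_anti_closure {f : ℝ → ℝ} {a b : ℝ} (hab : a < b)
    (hc : ContinuousOn f (Icc a b)) (hm : AntitoneOn f (Ioo a b)) :
    AntitoneOn f (Icc a b) := by
  have h := vdc_mono_closure hab hc.neg
    (fun x hx y hy hxy => neg_le_neg (hm hx hy hxy))
  intro x hx y hy hxy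
  have h2 := h hx hy hxy
  simpa using h2

theorem van_der_corput_first :
    ∃ C : ℝ, 0 < C ∧ ∀ (a b : ℝ), a < b → ∀ (φ : ℝ → ℝ) (ψ : ℝ → ℂ),
      ContDiffOn ℝ 1 φ (Set.Icc a b) →
      (MonotoneOn (derivWithin φ (Set.Icc a b)) (Set.Ioo a b) ∨
        AntitoneOn (derivWithin φ (Set.Icc a b)) (Set.Ioo a b)) →
      (∀ ξ ∈ Set.Icc a b, 1 ≤ |derivWithin φ (Set.Icc a b) ξ|) →
      ContDiffOn ℝ 1 ψ (Set.Icc a b) →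
      ∀ lam : ℝ, 0 < lam →
        ‖∫ ξ in a..b, Complex.exp (Complex.I * ((lam * φ ξ : ℝ) : ℂ)) * ψ ξ‖ ≤
          C * lam⁻¹ *
            ((∫ ξ in a..b, ‖derivWithin ψ (Set.Icc a b) ξ‖) + ⨆ ξ : Set.Icc a b, ‖ψ ξ‖) := by
  refine ⟨6, by norm_num, ?_⟩
  intro a b hab φ ψ hφ hmono hφ1 hψ lam hlam
  have hab' : a ≤ b := hab.le
  have hUD : UniqueDiffOn ℝ (Icc a b) := uniqueDiffOn_Icc hab
  set φd := derivWithin φ (Set.Icc a b) with hφd_def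
  set ψd := derivWithin ψ (Set.Icc a b) with hψd_def
  have hφc : ContinuousOn φ (Icc a b) := hφ.continuousOn
  have hψc : ContinuousOn ψ (Icc a b) := hψ.continuousOn
  have hφdc : ContinuousOn φd (Icc a b) := hφ.continuousOn_derivWithin hUD le_rfl
  have hψdc : ContinuousOn ψd (Icc a b) := hψ.continuousOn_derivWithin hUD le_rfl
  have hφdiff : ∀ x ∈ Ioo a b, HasDerivAt φ (φd x) x := by
    intro x hx
    have h1 : DifferentiableWithinAt ℝ φ (Icc a b) x :=
      (hφ.differentiableOn one_ne_zero) x (Ioo_subset_Icc_self hx)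
    exact (h1.hasDerivWithinAt).hasDerivAt (Icc_mem_nhds hx.1 hx.2)
  have hψdiff : ∀ x ∈ Ioo a b, HasDerivAt ψ (ψd x) x := by
    intro x hx
    have h1 : DifferentiableWithinAt ℝ ψ (Icc a b) x :=
      (hψ.differentiableOn one_ne_zero) x (Ioo_subset_Icc_self hx)
    exact (h1.hasDerivWithinAt).hasDerivAt (Icc_mem_nhds hx.1 hx.2)
  -- constant sign of φd
  have hsign : (∀ ξ ∈ Icc a b, 1 ≤ φd ξ) ∨ (∀ ξ ∈ Icc a b, φd ξ ≤ -1) := by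
    by_contra hcon
    push_neg at hcon
    obtain ⟨⟨ξ1, hξ1, hξ1'⟩, ⟨ξ2, hξ2, hξ2'⟩⟩ := hcon
    have h1 : φd ξ1 ≤ -1 := by
      have h := hφ1 ξ1 hξ1
      rcases abs_cases (φd ξ1) with ⟨he, _⟩ | ⟨he, _⟩
      · rw [he] at h; linarith
      · rw [he] at h; linarith
    have h2 : 1 ≤ φd ξ2 := by
      have h := hφ1 ξ2 hξ2
      rcases abs_cases (φd ξ2) with ⟨he, _⟩ | ⟨he, _⟩
      · rw [he] at h; linarith
      · rw [he] at h; linarith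
    have hsub : uIcc ξ1 ξ2 ⊆ Icc a b := uIcc_subset_Icc hξ1 hξ2
    have hivt := intermediate_value_uIcc (hφdc.mono hsub)
    have h0 : (0:ℝ) ∈ uIcc (φd ξ1) (φd ξ2) := by
      rw [Set.mem_uIcc]; left; constructor <;> linarith
    obtain ⟨ζ, hζ, hζ0⟩ := hivt h0
    have := hφ1 ζ (hsub hζ)
    rw [hζ0] at this
    norm_num at this
  have hmono' : MonotoneOn φd (Icc a b) ∨ AntitoneOn φd (Icc a b) := by
    rcases hmono with h | h
    · exact Or.inl (vdc_mono_closure hab hφdc h)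
    · exact Or.inr (vdc_anti_closure hab hφdc h)
  -- clamping
  set proj : ℝ → ℝ := fun ξ => max a (min b ξ) with hproj_def
  have hproj_mem : ∀ ξ, proj ξ ∈ Icc a b :=
    fun ξ => ⟨le_max_left _ _, max_le hab' (min_le_left _ _)⟩
  have hproj_eq : ∀ ξ ∈ Icc a b, proj ξ = ξ := by
    intro ξ hξ
    rw [hproj_def]
    dsimp only
    rw [min_eq_right hξ.2, max_eq_right hξ.1]
  have hproj_mono : Monotone proj :=
    fun x y hxy => max_le_max le_rfl (min_le_min le_rfl hxy)
  have hproj_cont : Continuous proj := continuous_const.max (continuous_const.min continuous_id)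
  -- main objects
  set e : ℝ → ℂ := fun ξ => Complex.exp (Complex.I * ((lam * φ ξ : ℝ) : ℂ)) with he_def
  set E : ℝ → ℂ := fun ξ => Complex.exp (Complex.I * ((lam * φ (proj ξ) : ℝ) : ℂ)) with hE_def
  have hE_eq : ∀ ξ ∈ Icc a b, E ξ = e ξ := by
    intro ξ hξ; rw [hE_def, he_def]; dsimp only; rw [hproj_eq ξ hξ]
  have hE_cont : Continuous E := by
    apply Complex.continuous_exp.comp
    exact continuous_const.mul
      (Complex.continuous_ofReal.comp
        (continuous_const.mul (hφc.comp_continuous hproj_cont hproj_mem)))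
  have hE_norm : ∀ ξ, ‖E ξ‖ = 1 := by
    intro ξ
    rw [hE_def]
    simp [Complex.norm_exp]
  set f : ℝ → ℂ := fun ξ => (Complex.I * ((lam * φd (proj ξ) : ℝ) : ℂ)) * E ξ with hf_def
  have hf_cont : Continuous f := by
    refine Continuous.mul ?_ hE_cont
    exact continuous_const.mul
      (Complex.continuous_ofReal.comp
        (continuous_const.mul (hφdc.comp_continuous hproj_cont hproj_mem)))
  have hEderiv : ∀ x ∈ Ioo a b, HasDerivAt E (f x) x := by
    intro x hx
    have h1 : HasDerivAt (fun η => lam * φ η) (lam * φd x) x := (hφdiff x hx).const_mul lam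
    have h2 : HasDerivAt (fun η => ((lam * φ η : ℝ) : ℂ)) ((lam * φd x : ℝ) : ℂ) x :=
      h1.ofReal_comp
    have h3 : HasDerivAt (fun η => Complex.I * ((lam * φ η : ℝ) : ℂ))
        (Complex.I * ((lam * φd x : ℝ) : ℂ)) x := h2.const_mul Complex.I
    have h4 := h3.cexp
    have heq : E =ᶠ[nhds x] (fun η => Complex.exp (Complex.I * ((lam * φ η : ℝ) : ℂ))) := by
      filter_upwards [Icc_mem_nhds hx.1 hx.2] with η hη
      rw [hE_def]; dsimp only; rw [hproj_eq η hη]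
    have h5 := h4.congr_of_eventuallyEq heq
    have h6 : f x = Complex.exp (Complex.I * ((lam * φ x : ℝ) : ℂ))
        * (Complex.I * ((lam * φd x : ℝ) : ℂ)) := by
      rw [hf_def, hE_def]; dsimp only
      rw [hproj_eq x (Ioo_subset_Icc_self hx)]
      ring
    rw [h6]
    exact h5
  -- the real weight
  set r : ℝ → ℝ := fun ξ => (lam * φd (proj ξ))⁻¹ with hr_def
  have hr_bd : ∀ ξ, |r ξ| ≤ lam⁻¹ := by
    intro ξ
    have h1 : 1 ≤ |φd (proj ξ)| := hφ1 _ (hproj_mem ξ)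
    rw [hr_def]
    dsimp only
    rw [abs_inv, abs_mul, abs_of_pos hlam]
    exact inv_anti₀ hlam (le_mul_of_one_le_right hlam.le h1)
  have hkey : ∀ u v : ℝ, u ∈ Icc a b → v ∈ Icc a b → φd u ≤ φd v →
      (lam * φd v)⁻¹ ≤ (lam * φd u)⁻¹ := by
    intro u v hu hv huv
    rcases hsign with hs | hs
    · have h1 : 0 < lam * φd u := mul_pos hlam (lt_of_lt_of_le one_pos (hs u hu))
      exact inv_anti₀ h1 (mul_le_mul_of_nonneg_left huv hlam.le)
    · have h1 : lam * φd v < 0 :=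
        mul_neg_of_pos_of_neg hlam (lt_of_le_of_lt (hs v hv) (by norm_num))
      have h2 : lam * φd u ≤ lam * φd v := mul_le_mul_of_nonneg_left huv hlam.le
      have h3 : 0 < -(lam * φd v) := neg_pos.2 h1
      have h4 := inv_anti₀ h3 (by linarith : -(lam * φd v) ≤ -(lam * φd u))
      rw [inv_neg, inv_neg] at h4
      linarith
  have hr_dir : Antitone r ∨ Monotone r := by
    rcases hmono' with hm | hm
    · left
      intro x y hxy
      exact hkey _ _ (hproj_mem x) (hproj_mem y)
        (hm (hproj_mem x) (hproj_mem y) (hproj_mono hxy))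
    · right
      intro x y hxy
      exact hkey _ _ (hproj_mem y) (hproj_mem x)
        (hm (hproj_mem x) (hproj_mem y) (hproj_mono hxy))
  -- bound on the primitive of e
  have hFbound : ∀ x ∈ Icc a b, ‖∫ ξ in a..x, e ξ‖ ≤ 6 * lam⁻¹ := by
    intro x hx
    have hax : a ≤ x := hx.1
    rw [intervalIntegral.integral_of_le hax]
    have hcongr : EqOn e (fun ξ => (-Complex.I) • (r ξ • f ξ)) (Ioc a x) := by
      intro ξ hξ
      have hξ' : ξ ∈ Icc a b := ⟨hξ.1.le, hξ.2.trans hx.2⟩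
      have hp := hproj_eq ξ hξ'
      have hφdne : φd ξ ≠ 0 := by
        intro hzero
        have := hφ1 ξ hξ'
        rw [hzero] at this
        norm_num at this
      have hne : lam * φd ξ ≠ 0 := mul_ne_zero hlam.ne' hφdne
      have hw : ((lam * φd ξ : ℝ) : ℂ) ≠ 0 := Complex.ofReal_ne_zero.2 hne
      have hgen : ∀ (w z : ℂ), w ≠ 0 → (-Complex.I) * (w⁻¹ * (Complex.I * w * z)) = z := by
        intro w z hw0
        have h9 : (-Complex.I) * (w⁻¹ * (Complex.I * w * z))
            = (-(Complex.I * Complex.I)) * ((w⁻¹ * w) * z) := by ring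
        rw [h9, Complex.I_mul_I, inv_mul_cancel₀ hw0]
        ring
      rw [he_def, hf_def, hE_def, hr_def]
      dsimp only
      rw [hp, smul_eq_mul, Complex.real_smul, Complex.ofReal_inv, hgen _ _ hw]
    rw [setIntegral_congr_fun measurableSet_Ioc hcongr]
    rw [MeasureTheory.integral_smul]
    rw [norm_smul]
    simp only [norm_neg, Complex.norm_I, one_mul]
    exact vdc_stepB a x lam⁻¹ hax (inv_nonneg.2 hlam.le) r E f hr_dir hr_bd hf_cont
      (hE_cont.continuousOn) (fun ξ _ => le_of_eq (hE_norm ξ))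
      (fun ξ hξ => hEderiv ξ ⟨hξ.1, hξ.2.trans_le hx.2⟩)
  -- integration by parts
  set F : ℝ → ℂ := fun x => ∫ ξ in a..x, e ξ with hF_def
  have he_cont : ContinuousOn e (Icc a b) :=
    hE_cont.continuousOn.congr fun ξ hξ => (hE_eq ξ hξ).symm
  have hF_cont : ContinuousOn F (Icc a b) := by
    have h1 : IntegrableOn e (uIcc a b) := by
      rw [uIcc_of_le hab']
      exact he_cont.integrableOn_Icc
    have h2 := continuousOn_primitive_interval h1
    rwa [uIcc_of_le hab'] at h2
  have he_ii : ∀ x ∈ Icc a b, IntervalIntegrable e volume a x := by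
    intro x hx
    apply ContinuousOn.intervalIntegrable
    rw [uIcc_of_le hx.1]
    exact he_cont.mono (Icc_subset_Icc le_rfl hx.2)
  have hFderiv : ∀ x ∈ Ioo a b, HasDerivAt F (e x) x := by
    intro x hx
    refine intervalIntegral.integral_hasDerivAt_right (he_ii x (Ioo_subset_Icc_self hx)) ?_ ?_
    · exact ContinuousOn.stronglyMeasurableAtFilter isOpen_Ioo
        (he_cont.mono Ioo_subset_Icc_self) x hx
    · exact he_cont.continuousAt (Icc_mem_nhds hx.1 hx.2)
  set G : ℝ → ℂ := fun x => F x * ψ x with hG_def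
  have hG_cont : ContinuousOn G (Icc a b) := hF_cont.mul hψc
  have hG_deriv : ∀ x ∈ Ioo a b, HasDerivAt G (e x * ψ x + F x * ψd x) x :=
    fun x hx => (hFderiv x hx).mul (hψdiff x hx)
  have hi1 : IntervalIntegrable (fun ξ => e ξ * ψ ξ) volume a b := by
    apply ContinuousOn.intervalIntegrable
    rw [uIcc_of_le hab']
    exact he_cont.mul hψc
  have hi2 : IntervalIntegrable (fun ξ => F ξ * ψd ξ) volume a b := by
    apply ContinuousOn.intervalIntegrable
    rw [uIcc_of_le hab']
    exact hF_cont.mul hψdc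
  have hIBP : ∫ ξ in a..b, (e ξ * ψ ξ + F ξ * ψd ξ) = G b - G a :=
    intervalIntegral.integral_eq_sub_of_hasDerivAt_of_le hab' hG_cont hG_deriv (hi1.add hi2)
  have hFa : F a = 0 := intervalIntegral.integral_same
  have hGa : G a = 0 := by rw [hG_def]; dsimp only; rw [hFa, zero_mul]
  have hsplit : (∫ ξ in a..b, e ξ * ψ ξ) + (∫ ξ in a..b, F ξ * ψd ξ) = G b := by
    rw [← intervalIntegral.integral_add hi1 hi2, hIBP, hGa, sub_zero]
  have hmain : ∫ ξ in a..b, e ξ * ψ ξ = G b - ∫ ξ in a..b, F ξ * ψd ξ := by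
    rw [← hsplit]; ring
  -- final estimate
  set S := ⨆ ξ : Set.Icc a b, ‖ψ ξ‖ with hS_def
  have hbdd : BddAbove (Set.range fun ξ : Set.Icc a b => ‖ψ ξ‖) := by
    obtain ⟨K, hK⟩ := isCompact_Icc.exists_bound_of_continuousOn hψc
    refine ⟨K, ?_⟩
    rintro y ⟨ξ, rfl⟩
    exact hK ξ ξ.2
  have hψb_le : ‖ψ b‖ ≤ S := by
    rw [hS_def]
    exact le_ciSup hbdd ⟨b, right_mem_Icc.2 hab'⟩
  have hterm1 : ‖G b‖ ≤ 6 * lam⁻¹ * S := by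
    rw [hG_def]
    dsimp only
    rw [norm_mul]
    have h1 : ‖F b‖ ≤ 6 * lam⁻¹ := hFbound b (right_mem_Icc.2 hab')
    exact mul_le_mul h1 hψb_le (norm_nonneg _) (by positivity)
  have hterm2 : ‖∫ ξ in a..b, F ξ * ψd ξ‖ ≤ 6 * lam⁻¹ * ∫ ξ in a..b, ‖ψd ξ‖ := by
    have h1 : ‖∫ ξ in a..b, F ξ * ψd ξ‖ ≤ ∫ ξ in a..b, ‖F ξ * ψd ξ‖ :=
      intervalIntegral.norm_integral_le_integral_norm hab'
    have hint1 : IntervalIntegrable (fun ξ => ‖F ξ * ψd ξ‖) volume a b := by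
      apply ContinuousOn.intervalIntegrable
      rw [uIcc_of_le hab']
      exact (hF_cont.mul hψdc).norm
    have hint2 : IntervalIntegrable (fun ξ => 6 * lam⁻¹ * ‖ψd ξ‖) volume a b := by
      apply ContinuousOn.intervalIntegrable
      rw [uIcc_of_le hab']
      exact continuousOn_const.mul hψdc.norm
    have h2 : ∫ ξ in a..b, ‖F ξ * ψd ξ‖ ≤ ∫ ξ in a..b, 6 * lam⁻¹ * ‖ψd ξ‖ := by
      apply intervalIntegral.integral_mono_on hab' hint1 hint2
      intro ξ hξ
      rw [norm_mul]
      exact mul_le_mul_of_nonneg_right (hFbound ξ hξ) (norm_nonneg _)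
    have h3 : ∫ ξ in a..b, 6 * lam⁻¹ * ‖ψd ξ‖ = 6 * lam⁻¹ * ∫ ξ in a..b, ‖ψd ξ‖ :=
      intervalIntegral.integral_const_mul _ _
    linarith
  calc ‖∫ ξ in a..b, e ξ * ψ ξ‖
      = ‖G b - ∫ ξ in a..b, F ξ * ψd ξ‖ := by rw [hmain]
    _ ≤ ‖G b‖ + ‖∫ ξ in a..b, F ξ * ψd ξ‖ := norm_sub_le _ _
    _ ≤ 6 * lam⁻¹ * S + 6 * lam⁻¹ * ∫ ξ in a..b, ‖ψd ξ‖ := add_le_add hterm1 hterm2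
    _ = 6 * lam⁻¹ * ((∫ ξ in a..b, ‖ψd ξ‖) + S) := by ring
end

section
/- Let m > 1 and s < 1/2. Then the maximal estimate along the exponentially tangential curve fails: there is no constant C such that ‖ sup_{t∈(0,1)} |S_t^m f(x − (log(1/t))^{−1})| ‖_{L^2((0,1), dμ)} ≤ C ‖f‖_{H^s(ℝ)} for all f ∈ H^s(ℝ), where dμ(x) = |x|^{α−1}dx with 0 < α ≤ 1. Specifically, for the family of data f_λ with f̂_λ = χ_{[0, λ^{1/m}/100]}, the ratio of the left-hand side to ‖f_λ‖_{H^s} tends to infinity as λ → ∞. -/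
open MeasureTheory Set Filter

/-- Solution of the 1d fractional Schrödinger equation in terms of the
Fourier transform `fhat` of the initial data. -/
noncomputable def S1 (m : ℝ) (fhat : ℝ → ℂ) (x t : ℝ) : ℂ :=
  ((2 * Real.pi)⁻¹ : ℝ) • ∫ ξ : ℝ, Complex.exp (Complex.I * ((x * ξ + t * |ξ| ^ m : ℝ) : ℂ)) * fhat ξ

/-- The `H^s(ℝ)` norm in terms of the Fourier transform. -/
noncomputable def HsNorm (s : ℝ) (fhat : ℝ → ℂ) : ℝ :=
  ((2 * Real.pi)⁻¹ * ∫ ξ : ℝ, (1 + ξ ^ 2) ^ s * ‖fhat ξ‖ ^ 2) ^ ((1 : ℝ) / 2)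

/-- The weighted `L²((0,1), |x|^{α-1}dx)` norm of the maximal function along the
exponentially tangential curve `x - (log(1/t))⁻¹`. -/
noncomputable def expTangMax (m α : ℝ) (fhat : ℝ → ℂ) : ℝ :=
  (∫ x in Set.Ioo (0:ℝ) 1,
      (⨆ t : Set.Ioo (0:ℝ) 1, ‖S1 m fhat (x - (Real.log (1 / (t:ℝ)))⁻¹) t‖) ^ 2 * |x| ^ (α - 1)) ^
    ((1 : ℝ) / 2)

namespace ExpTangAux

lemma norm_exp_I_mul (r : ℝ) : ‖Complex.exp (Complex.I * (r : ℂ))‖ = 1 := by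
  rw [mul_comm]; exact Complex.norm_exp_ofReal_mul_I r

lemma norm_S1_le (m : ℝ) (fhat : ℝ → ℂ) (x t : ℝ) :
    ‖S1 m fhat x t‖ ≤ (2 * Real.pi)⁻¹ * ∫ ξ : ℝ, ‖fhat ξ‖ := by
  rw [S1, norm_smul, Real.norm_eq_abs, abs_of_nonneg (by positivity)]
  have h1 : ‖∫ ξ : ℝ, Complex.exp (Complex.I * ((x * ξ + t * |ξ| ^ m : ℝ) : ℂ)) * fhat ξ‖
      ≤ ∫ ξ : ℝ, ‖Complex.exp (Complex.I * ((x * ξ + t * |ξ| ^ m : ℝ) : ℂ)) * fhat ξ‖ :=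
    norm_integral_le_integral_norm _
  have h2 : (∫ ξ : ℝ, ‖Complex.exp (Complex.I * ((x * ξ + t * |ξ| ^ m : ℝ) : ℂ)) * fhat ξ‖)
      = ∫ ξ : ℝ, ‖fhat ξ‖ := by
    congr 1; funext ξ; rw [norm_mul, norm_exp_I_mul, one_mul]
  rw [h2] at h1
  gcongr

lemma continuous_S1_x (m t : ℝ) (hm : 0 ≤ m) (fhat : ℝ → ℂ) (hf : Integrable fhat) :
    Continuous (fun x => S1 m fhat x t) := by
  unfold S1
  refine Continuous.const_smul (c := ((2 * Real.pi)⁻¹ : ℝ)) (g := fun x => ∫ ξ : ℝ, Complex.exp (Complex.I * ((x * ξ + t * |ξ| ^ m : ℝ) : ℂ)) * fhat ξ) ?_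
  apply continuous_of_dominated (bound := fun ξ => ‖fhat ξ‖)
  · intro x
    apply AEStronglyMeasurable.mul _ hf.1
    apply Continuous.aestronglyMeasurable
    apply Complex.continuous_exp.comp
    apply continuous_const.mul
    apply Complex.continuous_ofReal.comp
    exact (continuous_const.mul continuous_id).add
      (continuous_const.mul (continuous_abs.rpow_const fun ξ => Or.inr hm))
  · intro x
    filter_upwards with ξ
    rw [norm_mul, norm_exp_I_mul, one_mul]
  · exact hf.norm
  · filter_upwards with ξ
    apply Continuous.mul _ continuous_const
    apply Complex.continuous_exp.comp
    apply continuous_const.mul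
    apply Complex.continuous_ofReal.comp
    exact (continuous_id.mul continuous_const).add continuous_const

noncomputable def fh (N : ℝ) : ℝ → ℂ := Set.indicator (Set.Icc 0 N) (fun _ => (1:ℂ))

lemma fh_integrable (N : ℝ) : Integrable (fh N) := by
  rw [fh, integrable_indicator_iff measurableSet_Icc]
  exact integrableOn_const measure_Icc_lt_top.ne

instance : Nonempty (Set.Ioo (0:ℝ) 1) := ⟨⟨1/2, by norm_num⟩⟩

noncomputable def gmax (m : ℝ) (fhat : ℝ → ℂ) (x : ℝ) : ℝ :=
  ⨆ t : Set.Ioo (0:ℝ) 1, ‖S1 m fhat (x - (Real.log (1 / (t:ℝ)))⁻¹) t‖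

lemma gmax_bddAbove (m : ℝ) (fhat : ℝ → ℂ) (x : ℝ) :
    BddAbove (Set.range fun t : Set.Ioo (0:ℝ) 1 =>
      ‖S1 m fhat (x - (Real.log (1 / (t:ℝ)))⁻¹) t‖) := by
  refine ⟨(2 * Real.pi)⁻¹ * ∫ ξ : ℝ, ‖fhat ξ‖, ?_⟩
  rintro y ⟨t, rfl⟩
  exact norm_S1_le _ _ _ _

lemma gmax_nonneg (m : ℝ) (fhat : ℝ → ℂ) (x : ℝ) : 0 ≤ gmax m fhat x :=
  Real.iSup_nonneg fun _ => norm_nonneg _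

lemma gmax_le (m : ℝ) (fhat : ℝ → ℂ) (x : ℝ) :
    gmax m fhat x ≤ (2 * Real.pi)⁻¹ * ∫ ξ : ℝ, ‖fhat ξ‖ :=
  ciSup_le fun _ => norm_S1_le _ _ _ _

lemma le_gmax (m : ℝ) (fhat : ℝ → ℂ) (x : ℝ) (t : Set.Ioo (0:ℝ) 1) :
    ‖S1 m fhat (x - (Real.log (1 / (t:ℝ)))⁻¹) t‖ ≤ gmax m fhat x :=
  le_ciSup (gmax_bddAbove m fhat x) t

lemma gmax_measurable (m : ℝ) (hm : 0 ≤ m) (fhat : ℝ → ℂ) (hf : Integrable fhat) :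
    Measurable (gmax m fhat) := by
  apply LowerSemicontinuous.measurable
  apply lowerSemicontinuous_ciSup (fun x => gmax_bddAbove m fhat x)
  intro t
  apply Continuous.lowerSemicontinuous
  exact ((continuous_S1_x m t hm fhat hf).comp (continuous_id.sub continuous_const)).norm

lemma S1_re_lower (m N t : ℝ) (hm : 0 ≤ m) (hN : 0 ≤ N) (ht : 0 ≤ t)
    (hsmall : ∀ ξ ∈ Set.Icc (0:ℝ) N, t * |ξ| ^ m ≤ 1/2) :
    N / 2 ≤ (∫ ξ : ℝ,
      Complex.exp (Complex.I * (((0:ℝ) * ξ + t * |ξ| ^ m : ℝ) : ℂ)) * fh N ξ).re := by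
  have hcont : Continuous fun ξ : ℝ => Complex.exp (Complex.I * (((0:ℝ) * ξ + t * |ξ| ^ m : ℝ) : ℂ)) := by
    apply Complex.continuous_exp.comp
    apply continuous_const.mul
    apply Complex.continuous_ofReal.comp
    exact (continuous_const.mul continuous_id).add
      (continuous_const.mul (continuous_abs.rpow_const fun ξ => Or.inr hm))
  have hind : ∀ ξ : ℝ, Complex.exp (Complex.I * (((0:ℝ) * ξ + t * |ξ| ^ m : ℝ) : ℂ)) * fh N ξ
      = Set.indicator (Set.Icc 0 N)
          (fun ξ => Complex.exp (Complex.I * (((0:ℝ) * ξ + t * |ξ| ^ m : ℝ) : ℂ))) ξ := by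
    intro ξ
    by_cases h : ξ ∈ Set.Icc (0:ℝ) N <;> simp [fh, h]
  rw [show (∫ ξ : ℝ, Complex.exp (Complex.I * (((0:ℝ) * ξ + t * |ξ| ^ m : ℝ) : ℂ)) * fh N ξ)
      = ∫ ξ : ℝ, Set.indicator (Set.Icc 0 N)
          (fun ξ => Complex.exp (Complex.I * (((0:ℝ) * ξ + t * |ξ| ^ m : ℝ) : ℂ))) ξ from by
      congr 1; funext ξ; exact hind ξ,
    integral_indicator measurableSet_Icc]
  have hint : IntegrableOn
      (fun ξ : ℝ => Complex.exp (Complex.I * (((0:ℝ) * ξ + t * |ξ| ^ m : ℝ) : ℂ)))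
      (Set.Icc 0 N) volume := hcont.integrableOn_Icc
  rw [← RCLike.re_to_complex, ← integral_re hint]
  simp only [RCLike.re_to_complex]
  have hre : ∀ ξ : ℝ,
      (Complex.exp (Complex.I * (((0:ℝ) * ξ + t * |ξ| ^ m : ℝ) : ℂ))).re
        = Real.cos ((0:ℝ) * ξ + t * |ξ| ^ m) := by
    intro ξ
    rw [mul_comm]
    exact Complex.exp_ofReal_mul_I_re _
  calc N / 2 = ∫ _ in Set.Icc (0:ℝ) N, (1/2 : ℝ) := by
        rw [setIntegral_const, Real.volume_real_Icc_of_le (by linarith), smul_eq_mul]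
        ring
    _ ≤ ∫ ξ in Set.Icc (0:ℝ) N,
          (Complex.exp (Complex.I * (((0:ℝ) * ξ + t * |ξ| ^ m : ℝ) : ℂ))).re := by
        apply setIntegral_mono_on
        · exact integrableOn_const measure_Icc_lt_top.ne
        · exact hint.re
        · exact measurableSet_Icc
        · intro ξ hξ
          rw [hre ξ]
          have hθ0 : 0 ≤ (0:ℝ) * ξ + t * |ξ| ^ m := by
            have : (0:ℝ) ≤ t * |ξ| ^ m := by positivity
            linarith
          have hθ1 : (0:ℝ) * ξ + t * |ξ| ^ m ≤ 1/2 := by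
            have := hsmall ξ hξ; linarith
          have := Real.one_sub_sq_div_two_le_cos (x := (0:ℝ) * ξ + t * |ξ| ^ m)
          nlinarith

lemma gmax_lower (m lam : ℝ) (hm : 1 < m) (hlam : 0 < lam)
    (hl2 : 100 ≤ lam ^ (1/m)) (hl3 : 1 ≤ Real.log lam)
    (x : ℝ) (hx : x ∈ Set.Ioo 0 (Real.log lam)⁻¹) :
    lam ^ (1/m) / 100 / 16 ≤ gmax m (fh (lam ^ (1/m) / 100)) x := by
  set N := lam ^ (1/m) / 100 with hNdef
  have hN1 : 1 ≤ N := by rw [hNdef]; linarith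
  have hN0 : (0:ℝ) ≤ N := by linarith
  have hx0 : 0 < x := hx.1
  set t₀ : ℝ := Real.exp (-x⁻¹) with ht₀def
  have ht₀mem : t₀ ∈ Set.Ioo (0:ℝ) 1 := by
    constructor
    · exact Real.exp_pos _
    · rw [ht₀def, Real.exp_lt_one_iff]
      simp only [neg_neg, Left.neg_neg_iff]
      positivity
  have harg : x - (Real.log (1 / t₀))⁻¹ = 0 := by
    rw [ht₀def, one_div, ← Real.exp_neg, neg_neg, Real.log_exp, inv_inv, sub_self]
  have hlog : Real.log lam ≤ x⁻¹ := by
    rw [← inv_inv (Real.log lam)]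
    exact inv_anti₀ hx0 hx.2.le
  have ht₀le : t₀ ≤ lam⁻¹ := by
    rw [ht₀def, ← Real.exp_log hlam, ← Real.exp_neg]
    exact Real.exp_le_exp.2 (by linarith)
  have hmne : m ≠ 0 := by positivity
  have hNm : N ^ m = lam / 100 ^ m := by
    rw [hNdef, Real.div_rpow (Real.rpow_nonneg hlam.le _) (by norm_num : (0:ℝ) ≤ 100),
      ← Real.rpow_mul hlam.le, one_div_mul_cancel hmne, Real.rpow_one]
  have h100 : (100:ℝ) ≤ 100 ^ m := by
    nth_rewrite 1 [← Real.rpow_one 100]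
    exact Real.rpow_le_rpow_of_exponent_le (by norm_num) hm.le
  have hsmall : ∀ ξ ∈ Set.Icc (0:ℝ) N, t₀ * |ξ| ^ m ≤ 1/2 := by
    intro ξ hξ
    have habs : |ξ| ^ m ≤ N ^ m := by
      apply Real.rpow_le_rpow (abs_nonneg _) _ (by linarith)
      rw [abs_of_nonneg hξ.1]; exact hξ.2
    have h1 : t₀ * |ξ| ^ m ≤ lam⁻¹ * (lam / 100 ^ m) := by
      apply mul_le_mul ht₀le (hNm ▸ habs) (by positivity) (by positivity)
    have h2 : lam⁻¹ * (lam / 100 ^ m) = (100 ^ m : ℝ)⁻¹ := by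
      field_simp
    rw [h2] at h1
    have h3 : ((100:ℝ) ^ m)⁻¹ ≤ 1/100 := by
      rw [one_div]
      exact inv_anti₀ (by norm_num) h100
    linarith
  have hre := S1_re_lower m N t₀ (by linarith) hN0 (Real.exp_pos _).le hsmall
  have hS : N / 16 ≤ ‖S1 m (fh N) 0 t₀‖ := by
    have h2 : (S1 m (fh N) 0 t₀).re = (2*Real.pi)⁻¹ *
        (∫ ξ : ℝ, Complex.exp (Complex.I * (((0:ℝ) * ξ + t₀ * |ξ| ^ m : ℝ) : ℂ)) * fh N ξ).re := by
      rw [S1, Complex.smul_re]; rfl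
    have hpi : (1/8 : ℝ) ≤ (2*Real.pi)⁻¹ := by
      rw [show (1/8:ℝ) = 8⁻¹ by norm_num]
      exact inv_anti₀ (by positivity) (by nlinarith [Real.pi_le_four])
    calc N/16 = (1/8) * (N/2) := by ring
      _ ≤ (2*Real.pi)⁻¹ *
          (∫ ξ : ℝ, Complex.exp (Complex.I * (((0:ℝ) * ξ + t₀ * |ξ| ^ m : ℝ) : ℂ)) * fh N ξ).re :=
        mul_le_mul hpi hre (by linarith) (by positivity)
      _ = (S1 m (fh N) 0 t₀).re := h2.symm
      _ ≤ ‖S1 m (fh N) 0 t₀‖ := by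
        exact Complex.re_le_norm _
  refine le_trans hS ?_
  have harg' : x - (-Real.log t₀)⁻¹ = 0 := by
    rw [ht₀def, Real.log_exp, neg_neg, inv_inv, sub_self]
  have h := le_gmax m (fh N) x ⟨t₀, ht₀mem⟩
  calc ‖S1 m (fh N) 0 t₀‖ = ‖S1 m (fh N) (x - (Real.log (1 / t₀))⁻¹) t₀‖ := by rw [harg]
    _ ≤ _ := h

lemma Hs_integrand_eq (s N : ℝ) :
    (∫ ξ : ℝ, (1 + ξ ^ 2) ^ s * ‖fh N ξ‖ ^ 2) = ∫ ξ in Set.Icc (0:ℝ) N, (1 + ξ ^ 2) ^ s := by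
  rw [← integral_indicator measurableSet_Icc]
  congr 1; funext ξ
  by_cases h : ξ ∈ Set.Icc (0:ℝ) N <;> simp [fh, h]

lemma Hs_cont (s : ℝ) : Continuous fun ξ : ℝ => (1 + ξ ^ 2) ^ s :=
  (continuous_const.add (continuous_pow 2)).rpow_const fun ξ => Or.inl (by show (1:ℝ) + ξ ^ 2 ≠ 0; positivity)

lemma HsNorm_nonneg (s : ℝ) (fhat : ℝ → ℂ) : 0 ≤ HsNorm s fhat := by
  apply Real.rpow_nonneg
  apply mul_nonneg (by positivity)
  exact integral_nonneg fun ξ => by positivity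

end ExpTangAux

set_option maxHeartbeats 2000000 in
open ExpTangAux in
theorem expTang_maximal_fails (m s α : ℝ) (hm : 1 < m) (hs : s < 1/2)
    (hα0 : 0 < α) (hα1 : α ≤ 1) :
    (¬ ∃ C : ℝ, 0 < C ∧ ∀ fhat : ℝ → ℂ, Integrable fhat →
        expTangMax m α fhat ≤ C * HsNorm s fhat)
    ∧ Tendsto
        (fun lam : ℝ =>
          expTangMax m α (Set.indicator (Set.Icc 0 (lam ^ (1/m) / 100)) (fun _ => (1:ℂ))) /
            HsNorm s (Set.indicator (Set.Icc 0 (lam ^ (1/m) / 100)) (fun _ => (1:ℂ))))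
        atTop atTop := by
  have hm0 : (0:ℝ) ≤ m := by linarith
  have hm0' : (0:ℝ) < m := by linarith
  have hmne : m ≠ 0 := by positivity
  have hαne : α ≠ 0 := by positivity
  set s' : ℝ := max s 0 with hs'def
  have hs'0 : 0 ≤ s' := le_max_right _ _
  have hs'half : s' < 1/2 := max_lt hs (by norm_num)
  set β : ℝ := 1/2 + s' with hβdef
  set e2 : ℝ := 1 - β with he2def
  have he2 : 0 < e2 := by rw [he2def, hβdef]; linarith
  set q : ℝ := e2 / (m * α) with hqdef
  have hq : 0 < q := div_pos he2 (by positivity)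
  set e0 : ℝ := e2 / (2*m) with he0def
  have he0 : 0 < e0 := div_pos he2 (by positivity)
  set K : ℝ := q ^ (α/2) / (100 ^ e2 * 16) with hKdef
  have hK : 0 < K := by
    apply div_pos (Real.rpow_pos_of_pos hq _)
    have := Real.rpow_pos_of_pos (show (0:ℝ) < 100 by norm_num) e2
    nlinarith
  have hmain : ∀ᶠ lam : ℝ in atTop, K * lam ^ e0 ≤
      expTangMax m α (fh (lam ^ (1/m)/100)) / HsNorm s (fh (lam ^ (1/m)/100)) := by
    have h1 : Tendsto (fun lam : ℝ => lam ^ (1/m)) atTop atTop :=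
      tendsto_rpow_atTop (by positivity)
    filter_upwards [eventually_gt_atTop 0, h1.eventually_ge_atTop 100,
      Real.tendsto_log_atTop.eventually_ge_atTop 1] with lam hlam hl2 hl3
    set N := lam ^ (1/m) / 100 with hNdef
    have hN1 : (1:ℝ) ≤ N := by rw [hNdef]; linarith
    have hN0 : (0:ℝ) < N := by linarith
    -- H^s norm upper and lower bounds
    have hJint : IntegrableOn (fun ξ : ℝ => (1 + ξ^2) ^ s) (Set.Icc 0 N) volume :=
      (Hs_cont s).integrableOn_Icc
    have hJ0 : 0 ≤ ∫ ξ in Set.Icc (0:ℝ) N, (1 + ξ^2) ^ s :=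
      setIntegral_nonneg measurableSet_Icc (fun ξ _ => Real.rpow_nonneg (by positivity) _)
    have hJub : (∫ ξ in Set.Icc (0:ℝ) N, (1 + ξ^2) ^ s) ≤ N * ((1 + N^2) ^ s') := by
      calc (∫ ξ in Set.Icc (0:ℝ) N, (1 + ξ^2) ^ s)
          ≤ ∫ _ in Set.Icc (0:ℝ) N, ((1 + N^2) ^ s' : ℝ) := by
            apply setIntegral_mono_on hJint
              (integrableOn_const measure_Icc_lt_top.ne) measurableSet_Icc
            intro ξ hξ
            have h1 : (1:ℝ) ≤ 1 + ξ^2 := by nlinarith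
            have h2 : 1 + ξ^2 ≤ 1 + N^2 := by nlinarith [hξ.1, hξ.2]
            calc (1 + ξ^2) ^ s ≤ (1 + ξ^2) ^ s' :=
                  Real.rpow_le_rpow_of_exponent_le h1 (le_max_left _ _)
              _ ≤ (1 + N^2) ^ s' := Real.rpow_le_rpow (by linarith) h2 hs'0
        _ = N * (1 + N^2) ^ s' := by
            rw [setIntegral_const, Real.volume_real_Icc_of_le (by linarith),
              smul_eq_mul, sub_zero]
    have hHs_ub : HsNorm s (fh N) ≤ N ^ β := by
      unfold HsNorm
      rw [Hs_integrand_eq]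
      have hc : (1 + N^2 : ℝ) ^ s' ≤ 2 * N ^ (2*s') := by
        have h1 : (1 + N^2 : ℝ) ≤ 2 * N^2 := by nlinarith
        calc (1 + N^2 : ℝ) ^ s' ≤ (2 * N^2) ^ s' :=
              Real.rpow_le_rpow (by positivity) h1 hs'0
          _ = 2 ^ s' * (N^2 : ℝ) ^ s' := Real.mul_rpow (by norm_num) (by positivity)
          _ ≤ 2 * N ^ (2*s') := by
              have h2 : (2:ℝ) ^ s' ≤ 2 := by
                nth_rewrite 2 [← Real.rpow_one 2]
                exact Real.rpow_le_rpow_of_exponent_le (by norm_num) (by linarith)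
              have h3 : ((N^2 : ℝ)) ^ s' = N ^ (2*s') := by
                rw [← Real.rpow_natCast N 2, ← Real.rpow_mul hN0.le]
                norm_num
              rw [h3]
              exact mul_le_mul_of_nonneg_right h2 (Real.rpow_nonneg hN0.le _)
      have hπ : (2*Real.pi)⁻¹ ≤ 1/2 := by
        rw [show (1/2:ℝ) = 2⁻¹ by norm_num]
        exact inv_anti₀ (by norm_num) (by nlinarith [Real.pi_gt_three])
      have hA : (2*Real.pi)⁻¹ * (∫ ξ in Set.Icc (0:ℝ) N, (1 + ξ^2) ^ s) ≤ N ^ (1 + 2*s') := by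
        calc (2*Real.pi)⁻¹ * (∫ ξ in Set.Icc (0:ℝ) N, (1 + ξ^2) ^ s)
            ≤ (1/2) * (N * (2 * N^(2*s'))) := by
              apply mul_le_mul hπ _ hJ0 (by norm_num)
              exact le_trans hJub (mul_le_mul_of_nonneg_left hc hN0.le)
          _ = N * N^(2*s') := by ring
          _ = N ^ (1 + 2*s') := by rw [Real.rpow_add hN0, Real.rpow_one]
      calc ((2*Real.pi)⁻¹ * (∫ ξ in Set.Icc (0:ℝ) N, (1 + ξ^2) ^ s)) ^ ((1:ℝ)/2)
          ≤ (N ^ (1+2*s')) ^ ((1:ℝ)/2) :=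
            Real.rpow_le_rpow (mul_nonneg (by positivity) hJ0) hA (by norm_num)
        _ = N ^ β := by
            rw [← Real.rpow_mul hN0.le]
            congr 1
            rw [hβdef]; ring
    have hHs_pos : 0 < HsNorm s (fh N) := by
      have hJlb : N * ((1 + N^2) ^ (-|s|)) ≤ ∫ ξ in Set.Icc (0:ℝ) N, (1 + ξ^2) ^ s := by
        calc N * (1+N^2) ^ (-|s|) = ∫ _ in Set.Icc (0:ℝ) N, ((1+N^2) ^ (-|s|) : ℝ) := by
              rw [setIntegral_const, Real.volume_real_Icc_of_le (by linarith),
                smul_eq_mul, sub_zero]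
          _ ≤ ∫ ξ in Set.Icc (0:ℝ) N, (1 + ξ^2) ^ s := by
              apply setIntegral_mono_on
                (integrableOn_const measure_Icc_lt_top.ne) hJint measurableSet_Icc
              intro ξ hξ
              have h1 : (0:ℝ) < 1 + ξ^2 := by positivity
              have h2 : 1 + ξ^2 ≤ 1 + N^2 := by nlinarith [hξ.1, hξ.2]
              calc (1+N^2 : ℝ) ^ (-|s|) ≤ (1+ξ^2) ^ (-|s|) :=
                    Real.rpow_le_rpow_of_nonpos h1 h2 (neg_nonpos.2 (abs_nonneg _))
                _ ≤ (1+ξ^2) ^ s :=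
                    Real.rpow_le_rpow_of_exponent_le (by nlinarith) (neg_abs_le s)
      unfold HsNorm
      rw [Hs_integrand_eq]
      apply Real.rpow_pos_of_pos
      apply mul_pos (by positivity)
      calc (0:ℝ) < N * ((1 + N^2) ^ (-|s|)) := by positivity
        _ ≤ _ := hJlb
    -- the maximal function lower bound
    set δ : ℝ := (Real.log lam)⁻¹ with hδdef
    have hlogpos : (0:ℝ) < Real.log lam := by linarith
    have hδ0 : 0 < δ := by rw [hδdef]; positivity
    have hδ1 : δ ≤ 1 := by rw [hδdef]; exact inv_le_one_of_one_le₀ hl3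
    have hglow : ∀ x ∈ Set.Ioo (0:ℝ) δ, N/16 ≤ gmax m (fh N) x := by
      intro x hx
      exact gmax_lower m lam hm hlam hl2 hl3 x hx
    set B : ℝ := (2*Real.pi)⁻¹ * ∫ ξ : ℝ, ‖fh N ξ‖ with hBdef
    have hgm : Measurable (gmax m (fh N)) := gmax_measurable m hm0 (fh N) (fh_integrable N)
    have hwint : IntegrableOn (fun x : ℝ => |x| ^ (α-1)) (Set.Ioo 0 1) volume := by
      have h1 : IntervalIntegrable (fun x : ℝ => x ^ (α-1)) volume 0 1 :=
        intervalIntegral.intervalIntegrable_rpow' (by linarith)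
      have h2 : IntegrableOn (fun x : ℝ => x ^ (α-1)) (Set.Ioo 0 1) volume :=
        (intervalIntegrable_iff_integrableOn_Ioo_of_le (by norm_num)).1 h1
      apply h2.congr_fun _ measurableSet_Ioo
      intro x hx
      show x ^ (α-1) = |x| ^ (α-1)
      rw [abs_of_pos hx.1]
    have hFaesm : AEStronglyMeasurable (fun x : ℝ => gmax m (fh N) x ^ 2 * |x| ^ (α-1))
        (volume.restrict (Set.Ioo (0:ℝ) 1)) := by
      apply Measurable.aestronglyMeasurable
      have habs : Measurable (fun x : ℝ => |x| ^ (α-1)) := by fun_prop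
      exact (hgm.pow_const 2).mul habs
    have hFint : IntegrableOn (fun x : ℝ => gmax m (fh N) x ^ 2 * |x| ^ (α-1))
        (Set.Ioo 0 1) volume := by
      apply Integrable.mono (hwint.const_mul (B^2)) hFaesm
      filter_upwards with x
      have hg0 := gmax_nonneg m (fh N) x
      have hgB : gmax m (fh N) x ≤ B := gmax_le m (fh N) x
      have h1 : (0:ℝ) ≤ |x| ^ (α-1) := Real.rpow_nonneg (abs_nonneg _) _
      rw [Real.norm_eq_abs, Real.norm_eq_abs,
        abs_of_nonneg (a := gmax m (fh N) x ^ 2 * |x| ^ (α-1)) (by positivity),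
        abs_of_nonneg (a := B^2 * |x| ^ (α-1)) (by positivity)]
      exact mul_le_mul_of_nonneg_right (by nlinarith) h1
    have hsub : Set.Ioo (0:ℝ) δ ⊆ Set.Ioo (0:ℝ) 1 := Set.Ioo_subset_Ioo_right hδ1
    have hstep1 : ∫ _ in Set.Ioo (0:ℝ) δ, ((N/16)^2 * δ ^ (α-1))
        ≤ ∫ x in Set.Ioo (0:ℝ) 1, gmax m (fh N) x ^ 2 * |x| ^ (α-1) := by
      calc ∫ _ in Set.Ioo (0:ℝ) δ, ((N/16)^2 * δ ^ (α-1))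
          ≤ ∫ x in Set.Ioo (0:ℝ) δ, gmax m (fh N) x ^ 2 * |x| ^ (α-1) := by
            apply setIntegral_mono_on
              (integrableOn_const measure_Ioo_lt_top.ne)
              (hFint.mono_set hsub) measurableSet_Ioo
            intro x hx
            have h1 : δ ^ (α-1) ≤ |x| ^ (α-1) := by
              rw [abs_of_pos hx.1]
              exact Real.rpow_le_rpow_of_nonpos hx.1 hx.2.le (by linarith)
            have h2 : (N/16)^2 ≤ gmax m (fh N) x ^ 2 :=
              pow_le_pow_left₀ (by positivity) (hglow x hx) 2
            calc (N/16)^2 * δ^(α-1) ≤ gmax m (fh N) x ^2 * δ^(α-1) :=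
                  mul_le_mul_of_nonneg_right h2 (Real.rpow_nonneg hδ0.le _)
              _ ≤ gmax m (fh N) x ^2 * |x|^(α-1) := by
                  apply mul_le_mul_of_nonneg_left h1 (by positivity)
        _ ≤ ∫ x in Set.Ioo (0:ℝ) 1, gmax m (fh N) x ^ 2 * |x| ^ (α-1) := by
            apply setIntegral_mono_set hFint _ (HasSubset.Subset.eventuallyLE hsub)
            filter_upwards with x
            positivity
    have hEb : N/16 * δ ^ (α/2) ≤ expTangMax m α (fh N) := by
      show N/16 * δ ^ (α/2) ≤
        (∫ x in Set.Ioo (0:ℝ) 1, gmax m (fh N) x ^ 2 * |x| ^ (α - 1)) ^ ((1:ℝ)/2)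
      have hδα : δ * δ^(α-1) = δ^α := by
        nth_rewrite 1 [← Real.rpow_one δ]
        rw [← Real.rpow_add hδ0]
        congr 1; ring
      have hD : (N/16)^2 * δ ^ α ≤ ∫ x in Set.Ioo (0:ℝ) 1, gmax m (fh N) x ^ 2 * |x| ^ (α-1) := by
        calc (N/16)^2 * δ^α = δ * ((N/16)^2 * δ^(α-1)) := by rw [← hδα]; ring
          _ = ∫ _ in Set.Ioo (0:ℝ) δ, ((N/16)^2 * δ ^ (α-1)) := by
              rw [setIntegral_const, Real.volume_real_Ioo_of_le (by linarith),
                smul_eq_mul, sub_zero]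
          _ ≤ _ := hstep1
      calc N/16 * δ^(α/2) = ((N/16)^2 * δ^α) ^ ((1:ℝ)/2) := by
            rw [Real.mul_rpow (by positivity) (Real.rpow_nonneg hδ0.le _),
              ← Real.rpow_natCast (N/16) 2, ← Real.rpow_mul (by positivity),
              ← Real.rpow_mul hδ0.le]
            rw [show ((2:ℕ):ℝ) * ((1:ℝ)/2) = 1 by norm_num, Real.rpow_one,
              show α * ((1:ℝ)/2) = α/2 by ring]
        _ ≤ (∫ x in Set.Ioo (0:ℝ) 1, gmax m (fh N) x ^ 2 * |x| ^ (α-1)) ^ ((1:ℝ)/2) :=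
            Real.rpow_le_rpow (by positivity) hD (by norm_num)
    -- combine
    have hE0 : (0:ℝ) ≤ expTangMax m α (fh N) := le_trans (by positivity) hEb
    have hratio : (N/16 * δ^(α/2)) / N^β ≤ expTangMax m α (fh N) / HsNorm s (fh N) :=
      div_le_div₀ hE0 hEb hHs_pos hHs_ub
    refine le_trans ?_ hratio
    -- algebra
    have hNb : (0:ℝ) < N ^ β := Real.rpow_pos_of_pos hN0 _
    have e1 : (N/16 * δ^(α/2)) / N^β = N^e2 * δ^(α/2) / 16 := by
      rw [he2def, Real.rpow_sub hN0, Real.rpow_one]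
      ring
    have hlog2 : Real.log lam ≤ lam ^ q / q := Real.log_le_rpow_div hlam.le hq
    have h3 : (Real.log lam) ^ (α/2) ≤ (lam^q / q) ^ (α/2) :=
      Real.rpow_le_rpow hlogpos.le hlog2 (by positivity)
    have h4 : q ^ (α/2) / lam ^ (q*(α/2)) ≤ δ ^ (α/2) := by
      have hδr : δ ^ (α/2) = ((Real.log lam) ^ (α/2))⁻¹ := by
        rw [hδdef, ← Real.inv_rpow hlogpos.le]
      have heq : ((lam^q / q) ^ (α/2))⁻¹ = q ^ (α/2) / lam ^ (q*(α/2)) := by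
        rw [Real.div_rpow (Real.rpow_nonneg hlam.le _) hq.le, ← Real.rpow_mul hlam.le, inv_div]
      rw [hδr, ← heq]
      exact inv_anti₀ (Real.rpow_pos_of_pos hlogpos _) h3
    have h5 : N ^ e2 = lam ^ (e2/m) / 100 ^ e2 := by
      rw [hNdef, Real.div_rpow (Real.rpow_nonneg hlam.le _) (by norm_num : (0:ℝ) ≤ 100),
        ← Real.rpow_mul hlam.le]
      congr 2
      ring
    have h6 : lam ^ (e2/m) / lam ^ (q*(α/2)) = lam ^ e0 := by
      rw [← Real.rpow_sub hlam]
      congr 1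
      rw [hqdef, he0def]
      field_simp
      ring
    rw [e1, h5]
    calc K * lam ^ e0 = (q^(α/2)/(100^e2*16)) * (lam^(e2/m)/lam^(q*(α/2))) := by
          rw [h6, hKdef]
      _ = (lam^(e2/m)/100^e2) * (q^(α/2)/lam^(q*(α/2))) / 16 := by ring
      _ ≤ (lam^(e2/m)/100^e2) * (δ^(α/2)) / 16 := by
          have h7 : (0:ℝ) ≤ lam^(e2/m)/100^e2 := by positivity
          have := mul_le_mul_of_nonneg_left h4 h7
          linarith
  have hten : Tendsto
      (fun lam : ℝ =>
        expTangMax m α (Set.indicator (Set.Icc 0 (lam ^ (1/m) / 100)) (fun _ => (1:ℂ))) /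
          HsNorm s (Set.indicator (Set.Icc 0 (lam ^ (1/m) / 100)) (fun _ => (1:ℂ))))
      atTop atTop := by
    apply tendsto_atTop_mono' atTop hmain
    exact (tendsto_rpow_atTop he0).const_mul_atTop hK
  refine ⟨?_, hten⟩
  rintro ⟨C, hC, hall⟩
  have hub : ∀ lam : ℝ,
      expTangMax m α (Set.indicator (Set.Icc 0 (lam ^ (1/m) / 100)) (fun _ => (1:ℂ))) /
        HsNorm s (Set.indicator (Set.Icc 0 (lam ^ (1/m) / 100)) (fun _ => (1:ℂ))) ≤ C := by
    intro lam
    have h := hall _ (fh_integrable (lam ^ (1/m) / 100))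
    rcases eq_or_lt_of_le (HsNorm_nonneg s (fh (lam ^ (1/m) / 100))) with h0 | h0
    · show expTangMax m α (fh (lam ^ (1/m) / 100)) / HsNorm s (fh (lam ^ (1/m) / 100)) ≤ C
      rw [← h0, div_zero]
      exact hC.le
    · show expTangMax m α (fh (lam ^ (1/m) / 100)) / HsNorm s (fh (lam ^ (1/m) / 100)) ≤ C
      rw [div_le_iff₀ h0]
      exact h
  obtain ⟨lam, hlam⟩ := (hten.eventually_gt_atTop C).exists
  exact absurd (hub lam) (not_le.2 hlam)
end
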